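/- arXiv:1603.08176 — 4 statements merged into one kernel-verified Lean document; each statement's English description precedes it below -/
import Mathlib

section
/- Control of the relative flux by the relative entropy (Lemma A.1, second bound): Let hypotheses (H1), (H2), (H3) and the growth assumptions (A1), (A2), (A3) be satisfied. Then there exists a constant C₃ depending on M such that for each α = 1,…,d one has |F_α(u|ū)| ≤ C₃ η(u|ū) for all u ∈ ℝ^n and all ū ∈ B_M = {u ∈ ℝ^n : |u| ≤ M}, where F_α(u|ū) = F_α(u) − F_α(ū) − ∇F_α(ū) ∇A(ū)⁻¹ (A(u) − A(ū)). -/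
open scoped RealInnerProductSpace
open MeasureTheory

noncomputable section

set_option linter.unusedSectionVars false
variable {E : Type*} [NormedAddCommGroup E] [InnerProductSpace ℝ E] [FiniteDimensional ℝ E]

/-- bijective CLM on fin-dim space as a CLE -/
noncomputable def clmEquivOf (f : E →L[ℝ] E) (h : Function.Bijective f) : E ≃L[ℝ] E :=
  (LinearEquiv.ofBijective (f : E →ₗ[ℝ] E) h).toContinuousLinearEquiv

lemma clmEquivOf_apply (f : E →L[ℝ] E) (h : Function.Bijective f) (z : E) :
    clmEquivOf f h z = f z := by
  simp [clmEquivOf]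

noncomputable def unitOf (f : E →L[ℝ] E) (h : Function.Bijective f) : (E →L[ℝ] E)ˣ where
  val := f
  inv := ((clmEquivOf f h).symm : E →L[ℝ] E)
  val_inv := by
    ext z
    rw [ContinuousLinearMap.mul_apply]
    rw [show ((clmEquivOf f h).symm : E →L[ℝ] E) z = (clmEquivOf f h).symm z from rfl]
    rw [← clmEquivOf_apply f h]
    simp
  inv_val := by
    ext z
    rw [ContinuousLinearMap.mul_apply]
    rw [show f z = clmEquivOf f h z from (clmEquivOf_apply f h z).symm]
    simp

lemma ringInverse_eq (f : E →L[ℝ] E) (h : Function.Bijective f) :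
    Ring.inverse f = ((clmEquivOf f h).symm : E →L[ℝ] E) := by
  have := Ring.inverse_unit (unitOf f h)
  exact this

lemma ringInverse_apply (f : E →L[ℝ] E) (h : Function.Bijective f) (z : E) :
    Ring.inverse f z = (clmEquivOf f h).symm z := by
  rw [ringInverse_eq f h]; rfl

variable {F : Type*} [NormedAddCommGroup F] [NormedSpace ℝ F]

lemma hasFDerivAt_fderiv_apply {f : E → F} (hf : ContDiff ℝ 2 f) (x ξ : E) :
    HasFDerivAt (fun y => fderiv ℝ f y ξ)
      ((ContinuousLinearMap.apply ℝ F ξ).comp (fderiv ℝ (fderiv ℝ f) x)) x := by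
  have h1 : ContDiff ℝ 1 (fderiv ℝ f) := hf.fderiv_right (by norm_num)
  have h2 : HasFDerivAt (fderiv ℝ f) (fderiv ℝ (fderiv ℝ f) x) x :=
    (h1.differentiable one_ne_zero x).hasFDerivAt
  exact (ContinuousLinearMap.apply ℝ F ξ).hasFDerivAt.comp x h2

lemma iter_two_eq (f : E → F) (w ξ ζ : E) :
    iteratedFDeriv ℝ 2 f w ![ξ, ζ] = fderiv ℝ (fderiv ℝ f) w ξ ζ := by
  rw [iteratedFDeriv_two_apply]
  simp

lemma inv_hasStrictFDerivAt {A g : E → E} (hA : ContDiff ℝ 2 A)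
    (hb' : ∀ x, Function.Bijective (fderiv ℝ A x))
    (hgl : ∀ x, g (A x) = x) (a : E) :
    HasStrictFDerivAt g (((clmEquivOf (fderiv ℝ A a) (hb' a)).symm : E ≃L[ℝ] E) : E →L[ℝ] E)
      (A a) := by
  set e : E ≃L[ℝ] E := clmEquivOf (fderiv ℝ A a) (hb' a) with he
  have hcoe : (e : E →L[ℝ] E) = fderiv ℝ A a :=
    ContinuousLinearMap.ext (clmEquivOf_apply (fderiv ℝ A a) (hb' a))
  have h0 : HasStrictFDerivAt A (fderiv ℝ A a) a :=
    (hA.contDiffAt).hasStrictFDerivAt (by norm_num)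
  have hstrict : HasStrictFDerivAt A (e : E →L[ℝ] E) a := by
    rw [hcoe]; exact h0
  have hloc := hstrict.to_localInverse
  have hev := hstrict.eventually_right_inverse
  have heq : (HasStrictFDerivAt.localInverse A e a hstrict) =ᶠ[nhds (A a)] g := by
    filter_upwards [hev] with z hz
    have := hgl (HasStrictFDerivAt.localInverse A e a hstrict z)
    rw [hz] at this
    exact this.symm
  exact hloc.congr_of_eventuallyEq heq

lemma key_identity {A G : E → E} {η : E → ℝ} (hA : ContDiff ℝ 2 A) (hη : ContDiff ℝ 2 η)
    (hG : ContDiff ℝ 1 G)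
    (hH2 : ∀ w ξ, fderiv ℝ η w ξ = ⟪G w, fderiv ℝ A w ξ⟫) (x ξ : E) :
    fderiv ℝ (fderiv ℝ η) x ξ ξ - ⟪G x, fderiv ℝ (fderiv ℝ A) x ξ ξ⟫
      = ⟪fderiv ℝ G x ξ, fderiv ℝ A x ξ⟫ := by
  have h1 := hasFDerivAt_fderiv_apply hη x ξ
  have hGd : HasFDerivAt G (fderiv ℝ G x) x := (hG.differentiable one_ne_zero x).hasFDerivAt
  have h2' := hasFDerivAt_fderiv_apply hA x ξ
  have h2 := hGd.inner ℝ h2'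
  have hfun : (fun y => fderiv ℝ η y ξ) = (fun y => ⟪G y, fderiv ℝ A y ξ⟫) :=
    funext fun y => hH2 y ξ
  rw [hfun] at h1
  have huniq := h1.unique h2
  have := congrArg (fun (L : E →L[ℝ] ℝ) => L ξ) huniq
  simp only [ContinuousLinearMap.comp_apply, ContinuousLinearMap.apply_apply,
    fderivInnerCLM_apply, ContinuousLinearMap.prod_apply] at this
  rw [this]
  ring

/-- 1D Taylor-type lower bound. -/
lemma taylor_lower {g g' g'' : ℝ → ℝ} {c : ℝ}
    (hg : ∀ t, HasDerivAt g (g' t) t)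
    (hg' : ∀ t ∈ Set.Icc (0:ℝ) 1, HasDerivAt g' (g'' t) t)
    (h0 : g 0 = 0) (h0' : g' 0 = 0)
    (hcc : ∀ t ∈ Set.Icc (0:ℝ) 1, c ≤ g'' t) :
    c / 2 ≤ g 1 := by
  set h : ℝ → ℝ := fun t => g t - c / 2 * t ^ 2 with hh
  set h' : ℝ → ℝ := fun t => g' t - c * t with hh'
  have hhd : ∀ t, HasDerivAt h (h' t) t := by
    intro t
    have : HasDerivAt (fun s : ℝ => c / 2 * s ^ 2) (c / 2 * (2 * t)) t := by
      simpa using ((hasDerivAt_pow 2 t).const_mul (c / 2))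
    have h2 := (hg t).sub this
    have e : g' t - c / 2 * (2 * t) = h' t := by show _ = g' t - c * t; ring
    rw [e] at h2
    exact h2
  have hmono : MonotoneOn h' (Set.Icc 0 1) := by
    apply monotoneOn_of_deriv_nonneg (convex_Icc 0 1)
    · exact fun t ht => ((hg' t ht).sub ((hasDerivAt_id t).const_mul c)).continuousAt.continuousWithinAt
    · intro t ht
      rw [interior_Icc] at ht
      exact (((hg' t (Set.mem_Icc_of_Ioo ht)).sub
        (((hasDerivAt_id t).const_mul c))).differentiableAt).differentiableWithinAt
    · intro t ht
      rw [interior_Icc] at ht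
      have hd : HasDerivAt h' (g'' t - c * 1) t :=
        (hg' t (Set.mem_Icc_of_Ioo ht)).sub ((hasDerivAt_id t).const_mul c)
      rw [hd.deriv]
      have := hcc t (Set.mem_Icc_of_Ioo ht)
      linarith
  obtain ⟨θ, hθ, heq⟩ := exists_hasDerivAt_eq_slope h h' one_pos
    (fun t _ => (hhd t).continuousAt.continuousWithinAt)
    (fun t _ => hhd t)
  have h'0 : h' 0 = 0 := by simp [hh', h0']
  have hθmem : θ ∈ Set.Icc (0:ℝ) 1 := Set.mem_Icc_of_Ioo hθ
  have h0mem : (0:ℝ) ∈ Set.Icc (0:ℝ) 1 := by constructor <;> norm_num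
  have := hmono h0mem hθmem (le_of_lt hθ.1)
  rw [h'0] at this
  have hs : h 1 - h 0 = h' θ := by
    rw [heq]; ring
  have hh0 : h 0 = 0 := by simp [hh, h0]
  have hh1 : h 1 = g 1 - c / 2 := by simp [hh]
  have hfin : (0:ℝ) ≤ h 1 - h 0 := by rw [hs]; exact this
  rw [hh0, hh1] at hfin
  linarith

/-- Global strict positivity of the relative entropy. -/
lemma relEntropy_pos {A G : E → E} {η : E → ℝ}
    (hA : ContDiff ℝ 2 A) (hη : ContDiff ℝ 2 η) (hG : ContDiff ℝ 1 G)
    (hb : Function.Bijective A) (hb' : ∀ x, Function.Bijective (fderiv ℝ A x))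
    (hH2 : ∀ w ξ, fderiv ℝ η w ξ = ⟪G w, fderiv ℝ A w ξ⟫)
    (hpos : ∀ x ξ, ξ ≠ 0 → 0 < ⟪fderiv ℝ G x ξ, fderiv ℝ A x ξ⟫)
    (u ub : E) (hne : u ≠ ub) :
    0 < η u - η ub - ⟪G ub, A u - A ub⟫ := by
  set eq := Equiv.ofBijective A hb with heqv
  set g : E → E := ⇑eq.symm with hgdef
  have hgl : ∀ x, g (A x) = x := fun x => eq.symm_apply_apply x
  have hgr : ∀ y, A (g y) = y := fun y => eq.apply_symm_apply y
  set w : E := A u - A ub with hwdef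
  have hw : w ≠ 0 := sub_ne_zero.mpr (fun h => hne (hb.injective h))
  set c : ℝ → E := fun t => g (A ub + t • w) with hcdef
  have hc0 : c 0 = ub := by simp [hcdef]; exact hgl ub
  have hc1 : c 1 = u := by
    simp only [hcdef, one_smul, hwdef]
    rw [show A ub + (A u - A ub) = A u by abel]
    exact hgl u
  have hAc : ∀ t, A (c t) = A ub + t • w := fun t => hgr _
  set ξt : ℝ → E := fun t => (clmEquivOf (fderiv ℝ A (c t)) (hb' (c t))).symm w with hξdef
  have hline : ∀ t : ℝ, HasDerivAt (fun s : ℝ => A ub + s • w) w t := by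
    intro t
    have := ((hasDerivAt_id t).smul_const w).const_add (A ub)
    simpa using this
  have hcd : ∀ t, HasDerivAt c (ξt t) t := by
    intro t
    have hs := (inv_hasStrictFDerivAt hA hb' hgl (c t)).hasFDerivAt
    rw [hAc t] at hs
    exact hs.comp_hasDerivAt t (hline t)
  have hfAc : ∀ t, fderiv ℝ A (c t) (ξt t) = w := by
    intro t
    have := clmEquivOf_apply (fderiv ℝ A (c t)) (hb' (c t)) (ξt t)
    rw [← this, hξdef]
    exact (clmEquivOf (fderiv ℝ A (c t)) (hb' (c t))).apply_symm_apply w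
  have hξne : ∀ t, ξt t ≠ 0 := by
    intro t h0
    apply hw
    rw [← hfAc t, h0, map_zero]
  set m : ℝ → ℝ := fun t => ⟪G (c t), w⟫ with hmdef
  have hm : ∀ t, HasDerivAt m ⟪fderiv ℝ G (c t) (ξt t), w⟫ t := by
    intro t
    have hGc : HasDerivAt (fun s => G (c s)) (fderiv ℝ G (c t) (ξt t)) t :=
      ((hG.differentiable one_ne_zero (c t)).hasFDerivAt).comp_hasDerivAt t (hcd t)
    have := hGc.inner ℝ (hasDerivAt_const t w)
    simpa using this
  have hm' : ∀ t, 0 < ⟪fderiv ℝ G (c t) (ξt t), w⟫ := by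
    intro t
    have := hpos (c t) (ξt t) (hξne t)
    rwa [hfAc t] at this
  have hmono : StrictMono m := by
    apply strictMono_of_deriv_pos
    intro t
    rw [(hm t).deriv]
    exact hm' t
  set gf : ℝ → ℝ := fun t => η (c t) - t * ⟪G ub, w⟫ with hgfdef
  have hgf : ∀ t, HasDerivAt gf (m t - m 0) t := by
    intro t
    have hηc : HasDerivAt (fun s => η (c s)) (fderiv ℝ η (c t) (ξt t)) t :=
      ((hη.differentiable (by norm_num) (c t)).hasFDerivAt).comp_hasDerivAt t (hcd t)
    have hlin : HasDerivAt (fun s : ℝ => s * ⟪G ub, w⟫) ⟪G ub, w⟫ t := by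
      simpa using (hasDerivAt_id t).mul_const (⟪G ub, w⟫)
    have h2 := hηc.sub hlin
    have he1 : fderiv ℝ η (c t) (ξt t) = m t := by
      rw [hH2 (c t) (ξt t), hfAc t, hmdef]
    have he0 : m 0 = ⟪G ub, w⟫ := by rw [hmdef]; simp [hc0]
    have hval : m t - m 0 = fderiv ℝ η (c t) (ξt t) - ⟪G ub, w⟫ := by rw [he1, he0]
    rw [hval]
    exact h2
  obtain ⟨θ, hθ, heq⟩ := exists_hasDerivAt_eq_slope gf (fun t => m t - m 0) one_pos
    (fun t _ => (hgf t).continuousAt.continuousWithinAt)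
    (fun t _ => hgf t)
  have hmpos : 0 < m θ - m 0 := sub_pos.mpr (hmono hθ.1)
  have : gf 1 - gf 0 = m θ - m 0 := by
    rw [heq]; ring
  have hgf1 : gf 1 = η u - ⟪G ub, w⟫ := by simp [hgfdef, hc1]
  have hgf0 : gf 0 = η ub := by simp [hgfdef, hc0]
  rw [hgf1, hgf0] at this
  rw [hwdef] at this ⊢
  linarith

lemma quad_remainder {f : E → F} (hf : ContDiff ℝ 2 f) {K : ℝ} {s : Set E} (hs : Convex ℝ s)
    (hK : ∀ x ∈ s, ‖fderiv ℝ (fderiv ℝ f) x‖ ≤ K) {u ub : E} (hu : u ∈ s) (hub : ub ∈ s) :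
    ‖f u - f ub - fderiv ℝ f ub (u - ub)‖ ≤ K * ‖u - ub‖ * ‖u - ub‖ := by
  have hdf : Differentiable ℝ (fderiv ℝ f) :=
    (hf.fderiv_right (m := 1) (by norm_num)).differentiable one_ne_zero
  have hlip : ∀ x ∈ s, ‖fderiv ℝ f x - fderiv ℝ f ub‖ ≤ K * ‖x - ub‖ := by
    intro x hx
    exact Convex.norm_image_sub_le_of_norm_fderiv_le
      (fun y _ => (hdf y)) hK hs hub hx
  set s' : Set E := s ∩ Metric.closedBall ub ‖u - ub‖ with hs'
  have hs'c : Convex ℝ s' := hs.inter (convex_closedBall _ _)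
  have hu' : u ∈ s' := ⟨hu, by simp [Metric.mem_closedBall, dist_eq_norm]⟩
  have hub' : ub ∈ s' := ⟨hub, by simp⟩
  set g : E → F := fun x => f x - fderiv ℝ f ub x with hg
  have hgd : ∀ x, DifferentiableAt ℝ g x := fun x =>
    ((hf.differentiable (by norm_num) x).sub ((fderiv ℝ f ub).differentiableAt))
  have hgder : ∀ x, fderiv ℝ g x = fderiv ℝ f x - fderiv ℝ f ub := by
    intro x
    rw [hg]
    rw [fderiv_fun_sub (hf.differentiable (by norm_num) x) ((fderiv ℝ f ub).differentiableAt)]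
    rw [ContinuousLinearMap.fderiv]
  have hbound : ∀ x ∈ s', ‖fderiv ℝ g x‖ ≤ K * ‖u - ub‖ := by
    intro x hx
    rw [hgder x]
    calc ‖fderiv ℝ f x - fderiv ℝ f ub‖ ≤ K * ‖x - ub‖ := hlip x hx.1
    _ ≤ K * ‖u - ub‖ := by
        have hKnn : 0 ≤ K := le_trans (norm_nonneg (fderiv ℝ (fderiv ℝ f) ub)) (hK ub hub)
        have hd := Metric.mem_closedBall.mp hx.2
        rw [dist_eq_norm] at hd
        exact mul_le_mul_of_nonneg_left hd hKnn
  have := Convex.norm_image_sub_le_of_norm_fderiv_le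
    (fun y _ => (hgd y)) hbound hs'c hub' hu'
  have hguub : g u - g ub = f u - f ub - fderiv ℝ f ub (u - ub) := by
    rw [hg]
    simp only [map_sub]
    abel
  rw [hguub] at this
  linarith [this]

set_option maxHeartbeats 1000000 in
/-- **Lemma A.1, second bound (control of the relative flux by the relative entropy).**
Under hypotheses (H1), (H2), (H3) and the growth assumptions (A1), (A2), (A3),
there exists a constant `C₃` depending on `M` such that for each `α`,
`|F_α(u|ū)| ≤ C₃ η(u|ū)` for all `u ∈ ℝ^n` and all `ū ∈ B_M`, where
`F_α(u|ū) = F_α(u) − F_α(ū) − ∇F_α(ū) ∇A(ū)⁻¹ (A(u) − A(ū))`. -/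
theorem relative_flux_controlled_by_relative_entropy
    (n d : ℕ) (p : ℝ) (hp : 1 < p)
    (A : EuclideanSpace ℝ (Fin n) → EuclideanSpace ℝ (Fin n))
    (F : Fin d → EuclideanSpace ℝ (Fin n) → EuclideanSpace ℝ (Fin n))
    (η : EuclideanSpace ℝ (Fin n) → ℝ)
    (q : Fin d → EuclideanSpace ℝ (Fin n) → ℝ)
    (G : EuclideanSpace ℝ (Fin n) → EuclideanSpace ℝ (Fin n))
    -- smoothness of the constitutive functions
    (hAreg : ContDiff ℝ 2 A) (hFreg : ∀ α, ContDiff ℝ (⊤ : ℕ∞) (F α))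
    (hηreg : ContDiff ℝ (⊤ : ℕ∞) η) (hqreg : ∀ α, ContDiff ℝ (⊤ : ℕ∞) (q α))
    (hGreg : ContDiff ℝ (⊤ : ℕ∞) G)
    -- (H1): A is globally invertible with nonsingular differential
    (hH1 : Function.Bijective A)
    (hH1' : ∀ w, Function.Bijective (fderiv ℝ A w))
    -- (H2): entropy pair with multiplier G
    (hH2η : ∀ w ξ, fderiv ℝ η w ξ = ⟪G w, fderiv ℝ A w ξ⟫)
    (hH2q : ∀ α w ξ, fderiv ℝ (q α) w ξ = ⟪G w, fderiv ℝ (F α) w ξ⟫)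
    -- (H3): ∇²η(u) − G(u)·∇²A(u) is positive definite
    (hH3 : ∀ w (ξ : EuclideanSpace ℝ (Fin n)), ξ ≠ 0 →
      0 < iteratedFDeriv ℝ 2 η w ![ξ, ξ] - ⟪G w, iteratedFDeriv ℝ 2 A w ![ξ, ξ]⟫)
    -- (A1): growth of the entropy
    (β₁ β₂ B : ℝ) (hβ₁ : 0 < β₁) (hβ₂ : 0 < β₂) (hB : 0 < B)
    (hA1 : ∀ w : EuclideanSpace ℝ (Fin n),
      β₁ * (‖w‖ ^ p + 1) - B ≤ η w ∧ η w ≤ β₂ * (‖w‖ ^ p + 1))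
    -- (A2): |F_α(u)|/η(u) = o(1) as |u| → ∞
    (hA2 : ∀ α, ∀ ε > (0:ℝ), ∃ R₀, ∀ w : EuclideanSpace ℝ (Fin n),
      R₀ ≤ ‖w‖ → ‖F α w‖ ≤ ε * η w)
    -- (A3): |A(u)|/η(u) = o(1) as |u| → ∞
    (hA3 : ∀ ε > (0:ℝ), ∃ R₀, ∀ w : EuclideanSpace ℝ (Fin n),
      R₀ ≤ ‖w‖ → ‖A w‖ ≤ ε * η w)
    (M : ℝ) (hM : 0 < M) :
    ∃ C₃ > (0:ℝ), ∀ (α : Fin d) (u ubar : EuclideanSpace ℝ (Fin n)), ‖ubar‖ ≤ M →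
      ‖F α u - F α ubar - (fderiv ℝ (F α) ubar)
          (Ring.inverse (fderiv ℝ A ubar) (A u - A ubar))‖ ≤
        C₃ * (η u - η ubar - ⟪G ubar, A u - A ubar⟫) := by
  classical
  by_cases htriv : ∀ u v : EuclideanSpace ℝ (Fin n), u = v
  · refine ⟨1, one_pos, ?_⟩
    intro α u ub hub
    rw [htriv u ub]
    simp
  push_neg at htriv
  obtain ⟨u₀, v₀, huv₀⟩ := htriv
  have hnontriv : Nontrivial (EuclideanSpace ℝ (Fin n)) := ⟨u₀, v₀, huv₀⟩
  have hη2 : ContDiff ℝ 2 η := hηreg.of_le (by norm_cast)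
  have hG1 : ContDiff ℝ 1 G := hGreg.of_le (by norm_cast)
  have hF2 : ∀ α, ContDiff ℝ 2 (F α) := fun α => (hFreg α).of_le (by norm_cast)
  -- positive definiteness in the fderiv-fderiv form
  have hH3' : ∀ w ξ : EuclideanSpace ℝ (Fin n), ξ ≠ 0 →
      0 < fderiv ℝ (fderiv ℝ η) w ξ ξ - ⟪G w, fderiv ℝ (fderiv ℝ A) w ξ ξ⟫ := by
    intro w ξ hξ
    have h := hH3 w ξ hξ
    rwa [iter_two_eq, iter_two_eq] at h
  have hKey : ∀ x ξ : EuclideanSpace ℝ (Fin n), ξ ≠ 0 →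
      0 < ⟪fderiv ℝ G x ξ, fderiv ℝ A x ξ⟫ := by
    intro x ξ hξ
    have h := hH3' x ξ hξ
    rwa [key_identity hAreg hη2 hG1 hH2η x ξ] at h
  -- the relative entropy
  set D : EuclideanSpace ℝ (Fin n) → EuclideanSpace ℝ (Fin n) → ℝ :=
    fun u ub => η u - η ub - ⟪G ub, A u - A ub⟫ with hD
  have hDpos : ∀ u ub, u ≠ ub → 0 < D u ub := fun u ub hne =>
    relEntropy_pos hAreg hη2 hG1 hH1 hH1' hH2η hKey u ub hne
  have hDnonneg : ∀ u ub, 0 ≤ D u ub := by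
    intro u ub
    rcases eq_or_ne u ub with rfl | hne
    · simp [hD]
    · exact le_of_lt (hDpos u ub hne)
  -- continuity facts
  have hcA : Continuous A := hAreg.continuous
  have hcη : Continuous η := hηreg.continuous
  have hcG : Continuous G := hGreg.continuous
  have hcF : ∀ α, Continuous (F α) := fun α => (hFreg α).continuous
  have hcfA : Continuous (fderiv ℝ A) := hAreg.continuous_fderiv (by norm_num)
  have hcfF : ∀ α, Continuous (fderiv ℝ (F α)) := fun α =>
    (hF2 α).continuous_fderiv (by norm_num)
  have hcffA : Continuous (fderiv ℝ (fderiv ℝ A)) :=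
    (hAreg.fderiv_right (m := 1) (by norm_num)).continuous_fderiv one_ne_zero
  have hcffη : Continuous (fderiv ℝ (fderiv ℝ η)) :=
    (hη2.fderiv_right (m := 1) (by norm_num)).continuous_fderiv one_ne_zero
  have hcffF : ∀ α, Continuous (fderiv ℝ (fderiv ℝ (F α))) := fun α =>
    ((hF2 α).fderiv_right (m := 1) (by norm_num)).continuous_fderiv one_ne_zero
  have hcinv : Continuous (fun x : EuclideanSpace ℝ (Fin n) =>
      Ring.inverse (fderiv ℝ A x)) := by
    rw [continuous_iff_continuousAt]
    intro x
    have h1 : ContinuousAt (Ring.inverse : (EuclideanSpace ℝ (Fin n) →L[ℝ]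
        EuclideanSpace ℝ (Fin n)) → _) (fderiv ℝ A x) :=
      NormedRing.inverse_continuousAt (unitOf (fderiv ℝ A x) (hH1' x))
    exact h1.comp hcfA.continuousAt
  have hDcont : Continuous (fun z : EuclideanSpace ℝ (Fin n) × EuclideanSpace ℝ (Fin n) =>
      D z.1 z.2) := by
    apply Continuous.sub
    · exact (hcη.comp continuous_fst).sub (hcη.comp continuous_snd)
    · exact (hcG.comp continuous_snd).inner
        ((hcA.comp continuous_fst).sub (hcA.comp continuous_snd))
  clear_value D
  -- the Hessian form with frozen multiplier
  set Qf : EuclideanSpace ℝ (Fin n) → EuclideanSpace ℝ (Fin n) → EuclideanSpace ℝ (Fin n) → ℝ :=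
    fun x b ξ => fderiv ℝ (fderiv ℝ η) x ξ ξ - ⟪G b, fderiv ℝ (fderiv ℝ A) x ξ ξ⟫ with hQf
  have hQcont : Continuous (fun z : EuclideanSpace ℝ (Fin n) ×
      EuclideanSpace ℝ (Fin n) × EuclideanSpace ℝ (Fin n) => Qf z.1 z.2.1 z.2.2) := by
    apply Continuous.sub
    · exact ((hcffη.comp continuous_fst).clm_apply
        (continuous_snd.comp continuous_snd)).clm_apply (continuous_snd.comp continuous_snd)
    · exact (hcG.comp (continuous_fst.comp continuous_snd)).inner
        (((hcffA.comp continuous_fst).clm_apply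
          (continuous_snd.comp continuous_snd)).clm_apply (continuous_snd.comp continuous_snd))
  have hQdiag : ∀ x ξ : EuclideanSpace ℝ (Fin n), ξ ≠ 0 → 0 < Qf x x ξ := by
    intro x ξ hξ
    rw [hQf]
    exact hH3' x ξ hξ
  clear_value Qf
  -- uniform coercivity near the diagonal
  obtain ⟨c₀, hc₀, δ, hδ, hδ1, hcoer⟩ :
      ∃ c₀ > (0:ℝ), ∃ δ > (0:ℝ), δ ≤ 1 ∧ ∀ x b : EuclideanSpace ℝ (Fin n), ‖b‖ ≤ M →
        ‖x - b‖ ≤ δ → ∀ ξ, c₀ * ‖ξ‖ ^ 2 ≤ Qf x b ξ := by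
    set S1 : Set (EuclideanSpace ℝ (Fin n) × EuclideanSpace ℝ (Fin n)) :=
      Metric.closedBall 0 M ×ˢ Metric.sphere 0 1 with hS1
    have hS1c : IsCompact S1 := (isCompact_closedBall _ _).prod (isCompact_sphere _ _)
    have hS1ne : S1.Nonempty := by
      have hsp : (Metric.sphere (0 : EuclideanSpace ℝ (Fin n)) 1).Nonempty :=
        NormedSpace.sphere_nonempty.mpr zero_le_one
      obtain ⟨ξ₀, hξ₀⟩ := hsp
      exact ⟨(0, ξ₀), Set.mem_prod.mpr ⟨Metric.mem_closedBall_self hM.le, hξ₀⟩⟩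
    have hf0c : ContinuousOn (fun z : EuclideanSpace ℝ (Fin n) × EuclideanSpace ℝ (Fin n) =>
        Qf z.1 z.1 z.2) S1 := by
      apply Continuous.continuousOn
      exact hQcont.comp (continuous_fst.prodMk (continuous_fst.prodMk continuous_snd))
    obtain ⟨z₀, hz₀mem, hz₀min⟩ := hS1c.exists_isMinOn hS1ne hf0c
    set c₁ := Qf z₀.1 z₀.1 z₀.2 with hc₁
    have hz₀s : ‖z₀.2‖ = 1 := by
      have := (Set.mem_prod.mp hz₀mem).2
      simpa [Metric.mem_sphere, dist_eq_norm] using this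
    have hc₁pos : 0 < c₁ := hQdiag z₀.1 z₀.2 (by
      intro h0
      rw [h0] at hz₀s
      simp at hz₀s)
    clear_value c₁
    set K2 : Set (EuclideanSpace ℝ (Fin n) × EuclideanSpace ℝ (Fin n) × EuclideanSpace ℝ (Fin n)) :=
      Metric.closedBall 0 (M+1) ×ˢ (Metric.closedBall 0 M ×ˢ Metric.sphere 0 1) with hK2
    have hK2c : IsCompact K2 := (isCompact_closedBall _ _).prod
      ((isCompact_closedBall _ _).prod (isCompact_sphere _ _))
    have huc := hK2c.uniformContinuousOn_of_continuous hQcont.continuousOn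
    rw [Metric.uniformContinuousOn_iff] at huc
    obtain ⟨δ₀, hδ₀, hucd⟩ := huc (c₁/2) (by positivity)
    refine ⟨c₁/2, by positivity, min (δ₀/2) 1, by positivity, min_le_right _ _, ?_⟩
    intro x b hb hxb ξ
    rcases eq_or_ne ξ 0 with rfl | hξ
    · simp [hQf]
    set ζ := ‖ξ‖⁻¹ • ξ with hζ
    have hζ1 : ‖ζ‖ = 1 := norm_smul_inv_norm hξ
    clear_value ζ
    have hxnorm : ‖x‖ ≤ M + 1 := by
      have h1 : ‖x‖ ≤ ‖b‖ + ‖x - b‖ := by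
        have := norm_add_le b (x - b)
        simpa using this
      have h2 : ‖x - b‖ ≤ 1 := le_trans hxb (min_le_right _ _)
      linarith
    have hz : ((x, b, ζ) : EuclideanSpace ℝ (Fin n) × EuclideanSpace ℝ (Fin n) ×
        EuclideanSpace ℝ (Fin n)) ∈ K2 := by
      refine Set.mem_prod.mpr ⟨?_, Set.mem_prod.mpr ⟨?_, ?_⟩⟩
      · simpa [Metric.mem_closedBall, dist_eq_norm] using hxnorm
      · simpa [Metric.mem_closedBall, dist_eq_norm] using hb
      · simpa [Metric.mem_sphere, dist_eq_norm] using hζ1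
    have hz' : ((b, b, ζ) : EuclideanSpace ℝ (Fin n) × EuclideanSpace ℝ (Fin n) ×
        EuclideanSpace ℝ (Fin n)) ∈ K2 := by
      refine Set.mem_prod.mpr ⟨?_, Set.mem_prod.mpr ⟨?_, ?_⟩⟩
      · simpa [Metric.mem_closedBall, dist_eq_norm] using (le_trans hb (by linarith))
      · simpa [Metric.mem_closedBall, dist_eq_norm] using hb
      · simpa [Metric.mem_sphere, dist_eq_norm] using hζ1
    have hdist : dist ((x, b, ζ) : EuclideanSpace ℝ (Fin n) × EuclideanSpace ℝ (Fin n) ×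
        EuclideanSpace ℝ (Fin n)) ((b, b, ζ)) < δ₀ := by
      have hd : dist ((x, b, ζ) : EuclideanSpace ℝ (Fin n) × EuclideanSpace ℝ (Fin n) ×
          EuclideanSpace ℝ (Fin n)) ((b, b, ζ)) = dist x b := by
        rw [Prod.dist_eq, Prod.dist_eq, dist_self, dist_self, max_self]
        exact max_eq_left dist_nonneg
      rw [hd, dist_eq_norm]
      have : ‖x - b‖ ≤ δ₀/2 := le_trans hxb (min_le_left _ _)
      linarith
    have hnear := hucd _ hz _ hz' hdist
    rw [Real.dist_eq] at hnear
    have hdiag : c₁ ≤ Qf b b ζ := by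
      have hmem : ((b, ζ) : EuclideanSpace ℝ (Fin n) × EuclideanSpace ℝ (Fin n)) ∈ S1 :=
        Set.mem_prod.mpr ⟨by simpa [Metric.mem_closedBall, dist_eq_norm] using hb,
          by simpa [Metric.mem_sphere, dist_eq_norm] using hζ1⟩
      rw [hc₁]
      exact hz₀min hmem
    have h1 : c₁/2 ≤ Qf x b ζ := by
      have h2 : |Qf x b ζ - Qf b b ζ| < c₁/2 := hnear
      have h3 := (abs_lt.mp h2).1
      linarith
    have hscale : Qf x b ξ = ‖ξ‖^2 * Qf x b ζ := by
      have hξζ : ξ = ‖ξ‖ • ζ := by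
        rw [hζ, smul_smul, mul_inv_cancel₀ (norm_ne_zero_iff.mpr hξ), one_smul]
      conv_lhs => rw [hξζ]
      simp only [hQf, _root_.map_smul, ContinuousLinearMap.smul_apply, real_inner_smul_right,
        smul_eq_mul]
      ring
    rw [hscale]
    nlinarith [sq_nonneg ‖ξ‖]
  -- lower bound on D near the diagonal
  have hNearD : ∀ ub : EuclideanSpace ℝ (Fin n), ‖ub‖ ≤ M →
      ∀ u, ‖u - ub‖ ≤ δ → c₀ * ‖u - ub‖ ^ 2 / 2 ≤ D u ub := by
    intro ub hub u hu
    set v : EuclideanSpace ℝ (Fin n) := u - ub with hv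
    set γ : ℝ → EuclideanSpace ℝ (Fin n) := fun t => ub + t • v with hγ
    have hγd : ∀ t, HasDerivAt γ v t := by
      intro t
      have := ((hasDerivAt_id t).smul_const v).const_add ub
      rw [one_smul] at this; exact this
    set g : ℝ → ℝ := fun t => η (γ t) - ⟪G ub, A (γ t)⟫ - (η ub - ⟪G ub, A ub⟫) with hg
    set g' : ℝ → ℝ := fun t => fderiv ℝ η (γ t) v - ⟪G ub, fderiv ℝ A (γ t) v⟫ with hg'
    have hγ0 : γ 0 = ub := by simp [hγ]
    have hγ1 : γ 1 = u := by simp [hγ, hv]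
    have hgd : ∀ t, HasDerivAt g (g' t) t := by
      intro t
      have h1 : HasDerivAt (fun s => η (γ s)) (fderiv ℝ η (γ t) v) t :=
        ((hη2.differentiable (by norm_num) (γ t)).hasFDerivAt).comp_hasDerivAt t (hγd t)
      have h2 : HasDerivAt (fun s => A (γ s)) (fderiv ℝ A (γ t) v) t :=
        ((hAreg.differentiable (by norm_num) (γ t)).hasFDerivAt).comp_hasDerivAt t (hγd t)
      have h3 := (hasDerivAt_const t (G ub)).inner ℝ h2
      simp only [inner_zero_left, add_zero] at h3
      exact (h1.sub h3).sub_const _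
    have hg'd : ∀ t, HasDerivAt g' (Qf (γ t) ub v) t := by
      intro t
      have h1 : HasDerivAt (fun s => fderiv ℝ η (γ s) v)
          (fderiv ℝ (fderiv ℝ η) (γ t) v v) t := by
        have := ((hasFDerivAt_fderiv_apply hη2 (γ t) v).comp_hasDerivAt t (hγd t))
        exact this
      have h2 : HasDerivAt (fun s => fderiv ℝ A (γ s) v)
          (fderiv ℝ (fderiv ℝ A) (γ t) v v) t := by
        have := ((hasFDerivAt_fderiv_apply hAreg (γ t) v).comp_hasDerivAt t (hγd t))
        exact this
      have h3 := (hasDerivAt_const t (G ub)).inner ℝ h2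
      simp only [inner_zero_left, add_zero] at h3
      have hQv : Qf (γ t) ub v = fderiv ℝ (fderiv ℝ η) (γ t) v v
          - ⟪G ub, fderiv ℝ (fderiv ℝ A) (γ t) v v⟫ := by rw [hQf]
      rw [hQv]
      exact h1.sub h3
    have hg0 : g 0 = 0 := by simp [hg, hγ0]
    have hg'0 : g' 0 = 0 := by
      simp only [hg', hγ0]
      rw [hH2η ub v]
      ring
    have hbound : ∀ t ∈ Set.Icc (0:ℝ) 1, c₀ * ‖v‖^2 ≤ Qf (γ t) ub v := by
      intro t ht
      apply hcoer (γ t) ub hub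
      have hsub : γ t - ub = t • v := by simp [hγ]
      rw [hsub, norm_smul]
      have ht1 : ‖t‖ ≤ 1 := by
        rw [Real.norm_eq_abs, abs_le]
        constructor <;> [linarith [ht.1]; exact ht.2]
      have := mul_le_mul_of_nonneg_right ht1 (norm_nonneg v)
      rw [one_mul] at this
      exact le_trans this hu
    have htay := taylor_lower hgd (fun t _ => hg'd t) hg0 hg'0 hbound
    have hg1 : g 1 = D u ub := by
      simp only [hg, hγ1, hD]
      rw [inner_sub_right]
      ring
    rw [hg1] at htay
    have : c₀ * ‖u - ub‖ ^ 2 / 2 = c₀ * ‖v‖ ^ 2 / 2 := by rw [hv]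
    linarith [htay]
  -- per-α estimate
  have hper : ∀ α : Fin d, ∃ Cα : ℝ, 0 ≤ Cα ∧
      ∀ u ub : EuclideanSpace ℝ (Fin n), ‖ub‖ ≤ M →
      ‖F α u - F α ub - (fderiv ℝ (F α) ub)
          (Ring.inverse (fderiv ℝ A ub) (A u - A ub))‖ ≤ Cα * D u ub := by
    intro α
    -- bounds on compact sets
    obtain ⟨K1, hK1⟩ := (isCompact_closedBall (0 : EuclideanSpace ℝ (Fin n))
      (M+1)).exists_bound_of_continuousOn (f := fderiv ℝ (fderiv ℝ (F α))) (hcffF α).continuousOn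
    obtain ⟨K2A, hK2A⟩ := (isCompact_closedBall (0 : EuclideanSpace ℝ (Fin n))
      (M+1)).exists_bound_of_continuousOn (f := fderiv ℝ (fderiv ℝ A)) hcffA.continuousOn
    obtain ⟨K3, hK3⟩ := (isCompact_closedBall (0 : EuclideanSpace ℝ (Fin n))
      M).exists_bound_of_continuousOn (f := fderiv ℝ (F α)) (hcfF α).continuousOn
    obtain ⟨K4, hK4⟩ := (isCompact_closedBall (0 : EuclideanSpace ℝ (Fin n))
      M).exists_bound_of_continuousOn (f := fun x => Ring.inverse (fderiv ℝ A x)) hcinv.continuousOn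
    obtain ⟨KFb, hKFb⟩ := (isCompact_closedBall (0 : EuclideanSpace ℝ (Fin n))
      M).exists_bound_of_continuousOn (hcF α).continuousOn
    obtain ⟨KG, hKG⟩ := (isCompact_closedBall (0 : EuclideanSpace ℝ (Fin n))
      M).exists_bound_of_continuousOn hcG.continuousOn
    obtain ⟨KA0, hKA0⟩ := (isCompact_closedBall (0 : EuclideanSpace ℝ (Fin n))
      M).exists_bound_of_continuousOn hcA.continuousOn
    obtain ⟨Kη, hKη⟩ := (isCompact_closedBall (0 : EuclideanSpace ℝ (Fin n))
      M).exists_bound_of_continuousOn hcη.continuousOn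
    have h0M : (0 : EuclideanSpace ℝ (Fin n)) ∈ Metric.closedBall 0 M :=
      Metric.mem_closedBall_self hM.le
    have h0M1 : (0 : EuclideanSpace ℝ (Fin n)) ∈ Metric.closedBall 0 (M+1) :=
      Metric.mem_closedBall_self (by linarith)
    have hK1n : 0 ≤ K1 := le_trans (norm_nonneg _) (hK1 0 h0M1)
    have hK2An : 0 ≤ K2A := le_trans (norm_nonneg _) (hK2A 0 h0M1)
    have hK3n : 0 ≤ K3 := le_trans (norm_nonneg _) (hK3 0 h0M)
    have hK4n : 0 ≤ K4 := le_trans (norm_nonneg _) (hK4 0 h0M)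
    have hKFbn : 0 ≤ KFb := le_trans (norm_nonneg _) (hKFb 0 h0M)
    have hKGn : 0 ≤ KG := le_trans (norm_nonneg _) (hKG 0 h0M)
    have hKA0n : 0 ≤ KA0 := le_trans (norm_nonneg _) (hKA0 0 h0M)
    have hKηn : 0 ≤ Kη := le_trans (norm_nonneg _) (hKη 0 h0M)
    -- NEAR REGION
    set Cnear : ℝ := (K1 + K3 * (K4 * K2A)) * (2 / c₀) with hCnear
    have hK344 : 0 ≤ K1 + K3 * (K4 * K2A) := by
      nlinarith [mul_nonneg hK3n (mul_nonneg hK4n hK2An)]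
    have hCnearn : 0 ≤ Cnear := by
      rw [hCnear]
      exact mul_nonneg hK344 (div_nonneg zero_le_two hc₀.le)
    clear_value Cnear
    have hnear : ∀ u ub : EuclideanSpace ℝ (Fin n), ‖ub‖ ≤ M → ‖u - ub‖ ≤ δ →
        ‖F α u - F α ub - (fderiv ℝ (F α) ub)
          (Ring.inverse (fderiv ℝ A ub) (A u - A ub))‖ ≤ Cnear * D u ub := by
      intro u ub hub hu
      have hubB1 : ub ∈ Metric.closedBall (0 : EuclideanSpace ℝ (Fin n)) (M+1) := by
        simp only [Metric.mem_closedBall, dist_zero_right]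
        linarith
      have huB1 : u ∈ Metric.closedBall (0 : EuclideanSpace ℝ (Fin n)) (M+1) := by
        simp only [Metric.mem_closedBall, dist_zero_right]
        have h1 : ‖u‖ ≤ ‖ub‖ + ‖u - ub‖ := by
          have := norm_add_le ub (u - ub)
          simpa using this
        linarith
      have hremF := quad_remainder (hF2 α) (convex_closedBall _ _) hK1 huB1 hubB1
      have hremA := quad_remainder hAreg (convex_closedBall _ _) hK2A huB1 hubB1
      have hinv_lin : Ring.inverse (fderiv ℝ A ub) (fderiv ℝ A ub (u - ub)) = u - ub := by
        rw [ringInverse_apply _ (hH1' ub)]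
        conv_lhs => rw [← clmEquivOf_apply (fderiv ℝ A ub) (hH1' ub) (u - ub)]
        exact (clmEquivOf (fderiv ℝ A ub) (hH1' ub)).symm_apply_apply _
      set rA : EuclideanSpace ℝ (Fin n) := A u - A ub - fderiv ℝ A ub (u - ub) with hrA
      have hsplit : Ring.inverse (fderiv ℝ A ub) (A u - A ub)
          = (u - ub) + Ring.inverse (fderiv ℝ A ub) rA := by
        have hdec : A u - A ub = fderiv ℝ A ub (u - ub) + rA := by rw [hrA]; abel
        rw [hdec, _root_.map_add, hinv_lin]
      have hexp : F α u - F α ub - (fderiv ℝ (F α) ub)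
            (Ring.inverse (fderiv ℝ A ub) (A u - A ub))
          = (F α u - F α ub - fderiv ℝ (F α) ub (u - ub))
            - fderiv ℝ (F α) ub (Ring.inverse (fderiv ℝ A ub) rA) := by
        rw [hsplit, _root_.map_add]
        abel
      rw [hexp]
      have htri := norm_sub_le (F α u - F α ub - fderiv ℝ (F α) ub (u - ub))
        (fderiv ℝ (F α) ub (Ring.inverse (fderiv ℝ A ub) rA))
      have hubM : ub ∈ Metric.closedBall (0 : EuclideanSpace ℝ (Fin n)) M := by
        simp only [Metric.mem_closedBall, dist_zero_right]; exact hub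
      have hterm2 : ‖fderiv ℝ (F α) ub (Ring.inverse (fderiv ℝ A ub) rA)‖
          ≤ K3 * (K4 * (K2A * ‖u - ub‖ * ‖u - ub‖)) := by
        calc ‖fderiv ℝ (F α) ub (Ring.inverse (fderiv ℝ A ub) rA)‖
            ≤ ‖fderiv ℝ (F α) ub‖ * ‖Ring.inverse (fderiv ℝ A ub) rA‖ :=
              ContinuousLinearMap.le_opNorm _ _
          _ ≤ ‖fderiv ℝ (F α) ub‖ * (‖Ring.inverse (fderiv ℝ A ub)‖ * ‖rA‖) := by
              have := ContinuousLinearMap.le_opNorm (Ring.inverse (fderiv ℝ A ub)) rA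
              exact mul_le_mul_of_nonneg_left this (norm_nonneg _)
          _ ≤ K3 * (K4 * (K2A * ‖u - ub‖ * ‖u - ub‖)) := by
              have h3 := hK3 ub hubM
              have h4 := hK4 ub hubM
              have hrAn : ‖rA‖ ≤ K2A * ‖u - ub‖ * ‖u - ub‖ := hremA
              have hr0 : 0 ≤ ‖rA‖ := norm_nonneg _
              have hi0 : 0 ≤ ‖Ring.inverse (fderiv ℝ A ub)‖ := norm_nonneg _
              have hf0 : 0 ≤ ‖fderiv ℝ (F α) ub‖ := norm_nonneg _
              have s1 : ‖Ring.inverse (fderiv ℝ A ub)‖ * ‖rA‖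
                  ≤ K4 * (K2A * ‖u - ub‖ * ‖u - ub‖) := mul_le_mul h4 hrAn hr0 hK4n
              exact mul_le_mul h3 s1 (mul_nonneg hi0 hr0) hK3n
      have hDlow := hNearD ub hub u hu
      have hsq : ‖u - ub‖ ^ 2 ≤ (2 / c₀) * D u ub := by
        rw [div_mul_eq_mul_div, le_div_iff₀ hc₀]
        linarith only [hDlow]
      calc ‖F α u - F α ub - fderiv ℝ (F α) ub (u - ub)
            - fderiv ℝ (F α) ub (Ring.inverse (fderiv ℝ A ub) rA)‖
          ≤ ‖F α u - F α ub - fderiv ℝ (F α) ub (u - ub)‖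
            + ‖fderiv ℝ (F α) ub (Ring.inverse (fderiv ℝ A ub) rA)‖ := htri
        _ ≤ K1 * ‖u - ub‖ * ‖u - ub‖ + K3 * (K4 * (K2A * ‖u - ub‖ * ‖u - ub‖)) := by
            linarith [hremF, hterm2]
        _ = (K1 + K3 * (K4 * K2A)) * ‖u - ub‖ ^ 2 := by ring
        _ ≤ (K1 + K3 * (K4 * K2A)) * ((2 / c₀) * D u ub) :=
            mul_le_mul_of_nonneg_left hsq hK344
        _ = Cnear * D u ub := by rw [hCnear]; ring
    -- FAR REGION
    have hKK : 0 < KG + K3*K4 + 1 := by nlinarith [mul_nonneg hK3n hK4n]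
    set ε : ℝ := 1/(2*(KG + K3*K4 + 1)) with hε
    have hεpos : 0 < ε := by rw [hε]; positivity
    have hKK2 : (0:ℝ) < 2*(KG + K3*K4 + 1) := by linarith
    clear_value ε
    obtain ⟨R₁, hR₁⟩ := hA2 α 1 one_pos
    obtain ⟨R₂, hR₂⟩ := hA3 ε hεpos
    set C₀ : ℝ := Kη + KG*KA0 with hC₀
    set C₁ : ℝ := KFb + K3*K4*KA0 with hC₁
    have hC₀n : 0 ≤ C₀ := by
      rw [hC₀]; nlinarith [mul_nonneg hKGn hKA0n]
    have hC₁n : 0 ≤ C₁ := by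
      rw [hC₁]; nlinarith [mul_nonneg (mul_nonneg hK3n hK4n) hKA0n]
    clear_value C₀ C₁
    set T : ℝ := 4*(C₀+1) + 2*(C₁+1) + 1 with hT
    have hTpos : 0 < T := by rw [hT]; linarith
    clear_value T
    obtain ⟨R₃, hR₃⟩ : ∃ R₃ : ℝ, ∀ u : EuclideanSpace ℝ (Fin n), R₃ ≤ ‖u‖ → T ≤ η u := by
      refine ⟨max 1 ((T + B)/β₁), ?_⟩
      intro u hu
      have h1 : (1:ℝ) ≤ ‖u‖ := le_trans (le_max_left _ _) hu
      have h2 : (T + B)/β₁ ≤ ‖u‖ := le_trans (le_max_right _ _) hu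
      have h3 : T + B ≤ β₁ * ‖u‖ := by
        rw [div_le_iff₀ hβ₁] at h2
        linarith
      have h4 : ‖u‖ ≤ ‖u‖ ^ p := by
        calc ‖u‖ = ‖u‖ ^ (1:ℝ) := (Real.rpow_one _).symm
          _ ≤ ‖u‖ ^ p := Real.rpow_le_rpow_of_exponent_le h1 hp.le
      have h5 := (hA1 u).1
      nlinarith [mul_le_mul_of_nonneg_left h4 hβ₁.le]
    set R : ℝ := max R₁ (max R₂ R₃) with hRdef
    have hRa : R₁ ≤ R := by rw [hRdef]; exact le_max_left _ _
    have hRb : R₂ ≤ R := by rw [hRdef]; exact le_trans (le_max_left _ _) (le_max_right _ _)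
    have hRc : R₃ ≤ R := by rw [hRdef]; exact le_trans (le_max_right _ _) (le_max_right _ _)
    clear_value R
    have hfar : ∀ u ub : EuclideanSpace ℝ (Fin n), ‖ub‖ ≤ M → R ≤ ‖u‖ →
        ‖F α u - F α ub - (fderiv ℝ (F α) ub)
          (Ring.inverse (fderiv ℝ A ub) (A u - A ub))‖ ≤ 8 * D u ub := by
      intro u ub hub hu
      have hubM : ub ∈ Metric.closedBall (0 : EuclideanSpace ℝ (Fin n)) M := by
        simp only [Metric.mem_closedBall, dist_zero_right]; exact hub
      have hηT : T ≤ η u := hR₃ u (le_trans hRc hu)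
      have hηpos : 0 < η u := lt_of_lt_of_le hTpos hηT
      have hFu : ‖F α u‖ ≤ 1 * η u := hR₁ u (le_trans hRa hu)
      have hAu : ‖A u‖ ≤ ε * η u := hR₂ u (le_trans hRb hu)
      have hGub : ‖G ub‖ ≤ KG := hKG ub hubM
      have hAub : ‖A ub‖ ≤ KA0 := hKA0 ub hubM
      have hFub : ‖F α ub‖ ≤ KFb := hKFb ub hubM
      have hηub : |η ub| ≤ Kη := by
        have := hKη ub hubM
        rwa [Real.norm_eq_abs] at this
      have hfab : ‖fderiv ℝ (F α) ub‖ ≤ K3 := hK3 ub hubM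
      have hinvb : ‖Ring.inverse (fderiv ℝ A ub)‖ ≤ K4 := hK4 ub hubM
      have hAdiff : ‖A u - A ub‖ ≤ ε * η u + KA0 := by
        have := norm_sub_le (A u) (A ub)
        linarith
      have hAdn : 0 ≤ ε * η u + KA0 := by
        nlinarith [mul_nonneg hεpos.le hηpos.le]
      have hip : ⟪G ub, A u - A ub⟫ ≤ KG * (ε * η u + KA0) := by
        have h1 : ⟪G ub, A u - A ub⟫ ≤ ‖G ub‖ * ‖A u - A ub‖ := real_inner_le_norm _ _
        have h2 : ‖G ub‖ * ‖A u - A ub‖ ≤ KG * (ε * η u + KA0) :=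
          mul_le_mul hGub hAdiff (norm_nonneg _) hKGn
        linarith
      have hKGε : KG * ε ≤ 1/2 := by
        rw [hε, mul_one_div, div_le_div_iff₀ hKK2 two_pos]
        nlinarith [mul_nonneg hK3n hK4n]
      have hK34ε : K3 * K4 * ε ≤ 1/2 := by
        rw [hε, mul_one_div, div_le_div_iff₀ hKK2 two_pos]
        nlinarith [mul_nonneg hK3n hK4n]
      have hDlow : η u / 4 ≤ D u ub := by
        have hKGεη : KG * (ε * η u) ≤ (1/2) * η u := by
          have := mul_le_mul_of_nonneg_right hKGε hηpos.le
          calc KG * (ε * η u) = (KG * ε) * η u := by ring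
            _ ≤ (1/2) * η u := this
        have habs := abs_le.mp hηub
        have : η u - Kη - (KG * (ε * η u) + KG * KA0) ≤ D u ub := by
          simp only [hD]
          have hip' : ⟪G ub, A u - A ub⟫ ≤ KG * (ε * η u) + KG * KA0 := by
            linarith only [hip]
          linarith only [hip', habs.2]
        have hT4 : 4*(C₀+1) ≤ η u := by
          rw [hT] at hηT
          linarith only [hηT, hC₁n]
        rw [hC₀] at hT4
        linarith only [this, hT4, hKGεη]
      have hterm : ‖(fderiv ℝ (F α) ub) (Ring.inverse (fderiv ℝ A ub) (A u - A ub))‖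
          ≤ K3 * (K4 * (ε * η u + KA0)) := by
        calc ‖(fderiv ℝ (F α) ub) (Ring.inverse (fderiv ℝ A ub) (A u - A ub))‖
            ≤ ‖fderiv ℝ (F α) ub‖ * ‖Ring.inverse (fderiv ℝ A ub) (A u - A ub)‖ :=
              ContinuousLinearMap.le_opNorm _ _
          _ ≤ ‖fderiv ℝ (F α) ub‖ * (‖Ring.inverse (fderiv ℝ A ub)‖ * ‖A u - A ub‖) :=
              mul_le_mul_of_nonneg_left (ContinuousLinearMap.le_opNorm _ _) (norm_nonneg _)
          _ ≤ K3 * (K4 * (ε * η u + KA0)) := by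
              have hi0 : 0 ≤ ‖Ring.inverse (fderiv ℝ A ub)‖ := norm_nonneg _
              have hf0 : 0 ≤ ‖fderiv ℝ (F α) ub‖ := norm_nonneg _
              have hn0 : 0 ≤ ‖A u - A ub‖ := norm_nonneg _
              have s1 : ‖Ring.inverse (fderiv ℝ A ub)‖ * ‖A u - A ub‖
                  ≤ K4 * (ε * η u + KA0) := mul_le_mul hinvb hAdiff hn0 hK4n
              exact mul_le_mul hfab s1 (mul_nonneg hi0 hn0) hK3n
      have hN : ‖F α u - F α ub - (fderiv ℝ (F α) ub)
          (Ring.inverse (fderiv ℝ A ub) (A u - A ub))‖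
          ≤ 1 * η u + KFb + K3 * (K4 * (ε * η u + KA0)) := by
        have t1 := norm_sub_le (F α u - F α ub)
          ((fderiv ℝ (F α) ub) (Ring.inverse (fderiv ℝ A ub) (A u - A ub)))
        have t2 := norm_sub_le (F α u) (F α ub)
        linarith only [t1, t2, hFu, hFub, hterm]
      have hK34η : K3 * (K4 * (ε * η u)) ≤ (1/2) * η u := by
        have := mul_le_mul_of_nonneg_right hK34ε hηpos.le
        calc K3 * (K4 * (ε * η u)) = (K3 * K4 * ε) * η u := by ring
          _ ≤ (1/2) * η u := this
      have hT2 : 2*(C₁+1) ≤ η u := by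
        rw [hT] at hηT
        linarith only [hηT, hC₀n]
      rw [hC₁] at hT2
      calc ‖F α u - F α ub - (fderiv ℝ (F α) ub)
              (Ring.inverse (fderiv ℝ A ub) (A u - A ub))‖
          ≤ 1 * η u + KFb + K3 * (K4 * (ε * η u + KA0)) := hN
        _ ≤ 2 * η u := by linarith only [hK34η, hT2]
        _ ≤ 8 * D u ub := by linarith only [hDlow]
    -- MIDDLE REGION
    obtain ⟨Cm, hCmn, hmid⟩ : ∃ Cm : ℝ, 0 ≤ Cm ∧
        ∀ u ub : EuclideanSpace ℝ (Fin n), ‖ub‖ ≤ M → ‖u‖ ≤ R → δ ≤ ‖u - ub‖ →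
        ‖F α u - F α ub - (fderiv ℝ (F α) ub)
          (Ring.inverse (fderiv ℝ A ub) (A u - A ub))‖ ≤ Cm * D u ub := by
      set Kmid : Set (EuclideanSpace ℝ (Fin n) × EuclideanSpace ℝ (Fin n)) :=
        {z | ‖z.1‖ ≤ R ∧ ‖z.2‖ ≤ M ∧ δ ≤ ‖z.1 - z.2‖} with hKmid
      have hclosed : IsClosed Kmid := by
        have h1 : IsClosed {z : EuclideanSpace ℝ (Fin n) × EuclideanSpace ℝ (Fin n) |
            ‖z.1‖ ≤ R} := isClosed_le continuous_fst.norm continuous_const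
        have h2 : IsClosed {z : EuclideanSpace ℝ (Fin n) × EuclideanSpace ℝ (Fin n) |
            ‖z.2‖ ≤ M} := isClosed_le continuous_snd.norm continuous_const
        have h3 : IsClosed {z : EuclideanSpace ℝ (Fin n) × EuclideanSpace ℝ (Fin n) |
            δ ≤ ‖z.1 - z.2‖} := isClosed_le continuous_const
          (continuous_fst.sub continuous_snd).norm
        have heq : Kmid = ({z : EuclideanSpace ℝ (Fin n) × EuclideanSpace ℝ (Fin n) |
            ‖z.1‖ ≤ R} ∩ {z | ‖z.2‖ ≤ M}) ∩ {z | δ ≤ ‖z.1 - z.2‖} := by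
          ext z
          simp only [hKmid, Set.mem_setOf_eq, Set.mem_inter_iff]
          tauto
        rw [heq]
        exact (h1.inter h2).inter h3
      have hbddK : Bornology.IsBounded Kmid := by
        apply Bornology.IsBounded.subset
          (Metric.isBounded_closedBall (x := (0 : EuclideanSpace ℝ (Fin n))) (r := R)
            |>.prod (Metric.isBounded_closedBall (x := (0 : EuclideanSpace ℝ (Fin n))) (r := M)))
        intro z hz
        exact Set.mem_prod.mpr ⟨by simpa [Metric.mem_closedBall, dist_eq_norm] using hz.1,
          by simpa [Metric.mem_closedBall, dist_eq_norm] using hz.2.1⟩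
      have hcomp : IsCompact Kmid := Metric.isCompact_of_isClosed_isBounded hclosed hbddK
      set Nf : EuclideanSpace ℝ (Fin n) × EuclideanSpace ℝ (Fin n) → ℝ := fun z =>
        ‖F α z.1 - F α z.2 - (fderiv ℝ (F α) z.2)
          (Ring.inverse (fderiv ℝ A z.2) (A z.1 - A z.2))‖ with hNf
      have hNfc : Continuous Nf := by
        apply Continuous.norm
        apply Continuous.sub
        · exact ((hcF α).comp continuous_fst).sub ((hcF α).comp continuous_snd)
        · exact Continuous.clm_apply ((hcfF α).comp continuous_snd)
            (Continuous.clm_apply (hcinv.comp continuous_snd)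
              (((hcA.comp continuous_fst).sub (hcA.comp continuous_snd))))
      rcases Set.eq_empty_or_nonempty Kmid with hemp | hne
      · refine ⟨0, le_refl 0, ?_⟩
        intro u ub h1 h2 h3
        exfalso
        have : (u, ub) ∈ Kmid := ⟨h2, h1, h3⟩
        rw [hemp] at this
        exact this
      · obtain ⟨z₁, hz₁m, hz₁min⟩ := hcomp.exists_isMinOn hne hDcont.continuousOn
        set dmin : ℝ := D z₁.1 z₁.2 with hdmin
        clear_value dmin
        have hz₁ne : z₁.1 ≠ z₁.2 := by
          intro heq
          have := hz₁m.2.2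
          rw [heq, sub_self, norm_zero] at this
          linarith
        have hdminpos : 0 < dmin := by rw [hdmin]; exact hDpos _ _ hz₁ne
        obtain ⟨nmax, hnmax⟩ := hcomp.exists_bound_of_continuousOn hNfc.continuousOn
        have hnmaxn : 0 ≤ nmax := le_trans (norm_nonneg _) (hnmax z₁ hz₁m)
        refine ⟨nmax / dmin, div_nonneg hnmaxn hdminpos.le, ?_⟩
        intro u ub h1 h2 h3
        have hmem : ((u, ub) : EuclideanSpace ℝ (Fin n) × EuclideanSpace ℝ (Fin n)) ∈ Kmid :=
          ⟨h2, h1, h3⟩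
        have hNle : Nf (u, ub) ≤ nmax := by
          have := hnmax _ hmem
          rwa [Real.norm_eq_abs, abs_of_nonneg (norm_nonneg _)] at this
        have hDge : dmin ≤ D u ub := by rw [hdmin]; exact hz₁min hmem
        calc Nf (u, ub) ≤ nmax := hNle
          _ = nmax / dmin * dmin := by
              rw [div_mul_cancel₀ _ hdminpos.ne']
          _ ≤ nmax / dmin * D u ub :=
              mul_le_mul_of_nonneg_left hDge (div_nonneg hnmaxn hdminpos.le)
    -- combine the three regions
    refine ⟨Cnear + Cm + 8, by linarith, ?_⟩
    intro u ub hub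
    by_cases hclose : ‖u - ub‖ ≤ δ
    · have := hnear u ub hub hclose
      have hrest : 0 ≤ (Cm + 8) * D u ub :=
        mul_nonneg (by linarith) (hDnonneg u ub)
      linarith only [this, hrest]
    · push_neg at hclose
      by_cases hfarc : ‖u‖ ≤ R
      · have := hmid u ub hub hfarc hclose.le
        have hrest : 0 ≤ (Cnear + 8) * D u ub :=
          mul_nonneg (by linarith) (hDnonneg u ub)
        linarith only [this, hrest]
      · push_neg at hfarc
        have := hfar u ub hub hfarc.le
        have hrest : 0 ≤ (Cnear + Cm) * D u ub :=
          mul_nonneg (by linarith) (hDnonneg u ub)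
        linarith only [this, hrest]
  choose Cα hCαn hCα using hper
  have hsumn : 0 ≤ ∑ α : Fin d, Cα α := Finset.sum_nonneg fun i _ => hCαn i
  refine ⟨1 + ∑ α : Fin d, Cα α, by linarith, ?_⟩
  intro α u ub hub
  have hle : Cα α ≤ 1 + ∑ β : Fin d, Cα β := by
    have h1 : Cα α ≤ ∑ β : Fin d, Cα β :=
      Finset.single_le_sum (fun i _ => hCαn i) (Finset.mem_univ α)
    linarith
  calc ‖F α u - F α ub - (fderiv ℝ (F α) ub)
        (Ring.inverse (fderiv ℝ A ub) (A u - A ub))‖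
      ≤ Cα α * D u ub := hCα α u ub hub
    _ ≤ (1 + ∑ β : Fin d, Cα β) * D u ub :=
        mul_le_mul_of_nonneg_right hle (hDnonneg u ub)
    _ = (1 + ∑ β : Fin d, Cα β) * (η u - η ub - ⟪G ub, A u - A ub⟫) := by rw [hD]
end
end

section
/- Norm-like lower bound for the relative entropy (Lemma A.2): Let hypotheses (H1), (H2), (H3) and the growth assumptions (A1), (A2), (A3) be satisfied. Then one may select R > M + 1 and constants c₁, c₂ > 0 depending on M such that η(u|ū) ≥ c₁ |u − ū|² whenever |u| ≤ R and |ū| ≤ M, and η(u|ū) ≥ c₂ |u − ū|^p whenever |u| ≥ R and |ū| ≤ M. -/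
open scoped RealInnerProductSpace
open MeasureTheory

noncomputable section


variable {n : ℕ}

/-- derivative of `t ↦ fderiv f (c t) ξ` -/
lemma hasDerivAt_fderiv_apply {F : Type*} [NormedAddCommGroup F] [NormedSpace ℝ F]
    (f : EuclideanSpace ℝ (Fin n) → F) (hf : ContDiff ℝ 2 f)
    (c : ℝ → EuclideanSpace ℝ (Fin n)) (c' : EuclideanSpace ℝ (Fin n)) (t : ℝ)
    (hc : HasDerivAt c c' t) (ξ : EuclideanSpace ℝ (Fin n)) :
    HasDerivAt (fun s => fderiv ℝ f (c s) ξ) (fderiv ℝ (fderiv ℝ f) (c t) c' ξ) t := by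
  have h0 : ContDiff ℝ 1 (fderiv ℝ f) := hf.fderiv_right (by norm_num)
  have h1 : HasFDerivAt (fderiv ℝ f) (fderiv ℝ (fderiv ℝ f) (c t)) (c t) :=
    ((h0.differentiable one_ne_zero) (c t)).hasFDerivAt
  have h2 : HasDerivAt (fun s => fderiv ℝ f (c s)) (fderiv ℝ (fderiv ℝ f) (c t) c') t :=
    h1.comp_hasDerivAt t hc
  simpa using h2.clm_apply (hasDerivAt_const t ξ)

/-- the line `t ↦ v + t • ξ` -/
lemma hasDerivAt_line (v ξ : EuclideanSpace ℝ (Fin n)) (t : ℝ) :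
    HasDerivAt (fun s : ℝ => v + s • ξ) ξ t := by
  simpa using ((hasDerivAt_id t).smul_const ξ).const_add v

/-- Key identity: differentiating (H2) gives
`D²η w ξ ξ = ⟪∇G w ξ, ∇A w ξ⟫ + ⟪G w, D²A w ξ ξ⟫`. -/
lemma key_identity_s14 (A G : EuclideanSpace ℝ (Fin n) → EuclideanSpace ℝ (Fin n))
    (η : EuclideanSpace ℝ (Fin n) → ℝ)
    (hAreg : ContDiff ℝ 2 A) (hηreg : ContDiff ℝ (⊤ : ℕ∞) η)
    (hGreg : ContDiff ℝ (⊤ : ℕ∞) G)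
    (hH2η : ∀ w ξ, fderiv ℝ η w ξ = ⟪G w, fderiv ℝ A w ξ⟫)
    (w ξ : EuclideanSpace ℝ (Fin n)) :
    fderiv ℝ (fderiv ℝ η) w ξ ξ =
      ⟪fderiv ℝ G w ξ, fderiv ℝ A w ξ⟫ + ⟪G w, fderiv ℝ (fderiv ℝ A) w ξ ξ⟫ := by
  have hη2 : ContDiff ℝ 2 η := hηreg.of_le (WithTop.coe_le_coe.mpr le_top)
  have hc : HasDerivAt (fun s : ℝ => w + s • ξ) ξ 0 := hasDerivAt_line w ξ 0
  have hL : HasDerivAt (fun s : ℝ => fderiv ℝ η (w + s • ξ) ξ)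
      (fderiv ℝ (fderiv ℝ η) w ξ ξ) 0 := by
    simpa using hasDerivAt_fderiv_apply η hη2 _ ξ 0 hc ξ
  have hGc : HasDerivAt (fun s : ℝ => G (w + s • ξ)) (fderiv ℝ G w ξ) 0 := by
    have hGdiff : Differentiable ℝ G := hGreg.differentiable (by simp)
    have h := HasFDerivAt.comp_hasDerivAt 0 ((hGdiff (w + (0:ℝ) • ξ)).hasFDerivAt) hc
    simpa [Function.comp_def] using h
  have hAc : HasDerivAt (fun s : ℝ => fderiv ℝ A (w + s • ξ) ξ)
      (fderiv ℝ (fderiv ℝ A) w ξ ξ) 0 := by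
    simpa using hasDerivAt_fderiv_apply A hAreg _ ξ 0 hc ξ
  have hR : HasDerivAt (fun s : ℝ => ⟪G (w + s • ξ), fderiv ℝ A (w + s • ξ) ξ⟫)
      (⟪G w, fderiv ℝ (fderiv ℝ A) w ξ ξ⟫ + ⟪fderiv ℝ G w ξ, fderiv ℝ A w ξ⟫) 0 := by
    simpa using HasDerivAt.inner ℝ hGc hAc
  have heq : (fun s : ℝ => fderiv ℝ η (w + s • ξ) ξ)
      = fun s : ℝ => ⟪G (w + s • ξ), fderiv ℝ A (w + s • ξ) ξ⟫ := by
    funext s; exact hH2η _ ξ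
  rw [heq] at hL
  have := hL.unique hR
  linarith [this]

/-- Positivity of `⟪∇G ξ, ∇A ξ⟫` from (H3). -/
lemma Psi_pos (A G : EuclideanSpace ℝ (Fin n) → EuclideanSpace ℝ (Fin n))
    (η : EuclideanSpace ℝ (Fin n) → ℝ)
    (hAreg : ContDiff ℝ 2 A) (hηreg : ContDiff ℝ (⊤ : ℕ∞) η)
    (hGreg : ContDiff ℝ (⊤ : ℕ∞) G)
    (hH2η : ∀ w ξ, fderiv ℝ η w ξ = ⟪G w, fderiv ℝ A w ξ⟫)
    (hH3 : ∀ w (ξ : EuclideanSpace ℝ (Fin n)), ξ ≠ 0 →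
      0 < iteratedFDeriv ℝ 2 η w ![ξ, ξ] - ⟪G w, iteratedFDeriv ℝ 2 A w ![ξ, ξ]⟫)
    (w ξ : EuclideanSpace ℝ (Fin n)) (hξ : ξ ≠ 0) :
    0 < ⟪fderiv ℝ G w ξ, fderiv ℝ A w ξ⟫ := by
  have h3 := hH3 w ξ hξ
  rw [iteratedFDeriv_two_apply, iteratedFDeriv_two_apply] at h3
  simp only [Matrix.cons_val_zero, Matrix.cons_val_one, Matrix.head_cons] at h3
  have hk := key_identity_s14 A G η hAreg hηreg hGreg hH2η w ξ
  linarith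

/-- Strict positivity of the relative entropy off the diagonal. -/
lemma relent_pos (A G : EuclideanSpace ℝ (Fin n) → EuclideanSpace ℝ (Fin n))
    (η : EuclideanSpace ℝ (Fin n) → ℝ)
    (hAreg : ContDiff ℝ 2 A) (hηreg : ContDiff ℝ (⊤ : ℕ∞) η)
    (hGreg : ContDiff ℝ (⊤ : ℕ∞) G)
    (hH1 : Function.Bijective A)
    (hH1' : ∀ w, Function.Bijective (fderiv ℝ A w))
    (hH2η : ∀ w ξ, fderiv ℝ η w ξ = ⟪G w, fderiv ℝ A w ξ⟫)
    (hH3 : ∀ w (ξ : EuclideanSpace ℝ (Fin n)), ξ ≠ 0 →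
      0 < iteratedFDeriv ℝ 2 η w ![ξ, ξ] - ⟪G w, iteratedFDeriv ℝ 2 A w ![ξ, ξ]⟫)
    (u v : EuclideanSpace ℝ (Fin n)) (huv : u ≠ v) :
    0 < η u - η v - ⟪G v, A u - A v⟫ := by
  classical
  have hΨ := Psi_pos A G η hAreg hηreg hGreg hH2η hH3
  set invA : EuclideanSpace ℝ (Fin n) → EuclideanSpace ℝ (Fin n) := Function.invFun A with hinvA_def
  have hAinv : ∀ y, A (invA y) = y := Function.rightInverse_invFun hH1.2
  have hinvA : ∀ x, invA (A x) = x := Function.leftInverse_invFun hH1.1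
  -- the derivative of `A` as a continuous linear equivalence
  let L : EuclideanSpace ℝ (Fin n) → (EuclideanSpace ℝ (Fin n) ≃L[ℝ] EuclideanSpace ℝ (Fin n)) := fun w =>
    (LinearEquiv.ofBijective (fderiv ℝ A w).toLinearMap (hH1' w)).toContinuousLinearEquiv
  have hLcoe : ∀ w, ((L w) : EuclideanSpace ℝ (Fin n) →L[ℝ] EuclideanSpace ℝ (Fin n)) = fderiv ℝ A w := by
    intro w; apply ContinuousLinearMap.ext; intro x; rfl
  have hstrict : ∀ w, HasStrictFDerivAt A ((L w) : EuclideanSpace ℝ (Fin n) →L[ℝ] EuclideanSpace ℝ (Fin n)) w := by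
    intro w; rw [hLcoe]
    exact hAreg.contDiffAt.hasStrictFDerivAt (by norm_num)
  have hinv : ∀ w, HasFDerivAt invA (((L w).symm : EuclideanSpace ℝ (Fin n) →L[ℝ] EuclideanSpace ℝ (Fin n))) (A w) := by
    intro w
    have h1 : HasStrictFDerivAt ((hstrict w).localInverse A (L w) w)
        (((L w).symm : EuclideanSpace ℝ (Fin n) →L[ℝ] EuclideanSpace ℝ (Fin n))) (A w) := (hstrict w).to_localInverse
    have h2 : invA =ᶠ[nhds (A w)] (hstrict w).localInverse A (L w) w := by
      filter_upwards [(hstrict w).eventually_right_inverse] with y hy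
      exact (congrArg invA hy).symm.trans (hinvA _)
    exact h1.hasFDerivAt.congr_of_eventuallyEq h2
  set a := A u with ha
  set b := A v with hb
  have hab : a - b ≠ 0 := sub_ne_zero.mpr fun h => huv (hH1.1 h)
  set γ : ℝ → EuclideanSpace ℝ (Fin n) := fun t => b + t • (a - b) with hγdef
  set uf : ℝ → EuclideanSpace ℝ (Fin n) := fun t => invA (γ t) with hufdef
  have hAuf : ∀ t, A (uf t) = γ t := fun t => hAinv _
  set ψ : ℝ → ℝ := fun t => ⟪G (uf t), a - b⟫ with hψdef
  set φ : ℝ → ℝ := fun t => η (uf t) with hφdef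
  -- derivative facts
  have hufd : ∀ t, HasDerivAt uf ((L (uf t)).symm (a - b)) t := by
    intro t
    have h := hinv (uf t)
    rw [hAuf t] at h
    exact h.comp_hasDerivAt t (hasDerivAt_line b (a-b) t)
  have hξt : ∀ t, (L (uf t)).symm (a - b) ≠ 0 := by
    intro t h
    apply hab
    have := congrArg (L (uf t)) h
    simpa using this
  have hfAξ : ∀ t, fderiv ℝ A (uf t) ((L (uf t)).symm (a - b)) = a - b := by
    intro t
    have := (L (uf t)).apply_symm_apply (a - b)
    rw [← hLcoe (uf t)]
    exact this
  have hφd : ∀ t, HasDerivAt φ (ψ t) t := by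
    intro t
    have h := ((hηreg.differentiable (by simp)) (uf t)).hasFDerivAt.comp_hasDerivAt t (hufd t)
    have hval : fderiv ℝ η (uf t) ((L (uf t)).symm (a - b)) = ψ t := by
      rw [hH2η, hfAξ t]
    rw [hval] at h
    simpa [hφdef, Function.comp_def] using h
  have hψd : ∀ t, HasDerivAt ψ
      (⟪fderiv ℝ G (uf t) ((L (uf t)).symm (a - b)), a - b⟫) t := by
    intro t
    have hGc : HasDerivAt (fun s => G (uf s))
        (fderiv ℝ G (uf t) ((L (uf t)).symm (a - b))) t := by
      have h := ((hGreg.differentiable (by simp)) (uf t)).hasFDerivAt.comp_hasDerivAt t (hufd t)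
      simpa [Function.comp_def] using h
    have := HasDerivAt.inner ℝ hGc (hasDerivAt_const t (a - b))
    simpa using this
  have hψpos : ∀ t, 0 < ⟪fderiv ℝ G (uf t) ((L (uf t)).symm (a - b)), a - b⟫ := by
    intro t
    have := hΨ (uf t) _ (hξt t)
    rwa [hfAξ t] at this
  -- strict monotonicity of ψ and MVT for φ
  have hψmono : StrictMonoOn ψ (Set.Icc 0 1) := by
    apply strictMonoOn_of_deriv_pos (convex_Icc 0 1)
    · exact fun t _ => ((hψd t).differentiableAt.continuousAt).continuousWithinAt
    · intro t _
      rw [(hψd t).deriv]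
      exact hψpos t
  obtain ⟨c, hc, hslope⟩ := exists_hasDerivAt_eq_slope φ ψ (by norm_num : (0:ℝ) < 1)
    (fun t _ => (hφd t).differentiableAt.continuousAt.continuousWithinAt)
    (fun t _ => hφd t)
  have hφ1 : φ 1 = η u := by
    have : γ 1 = a := by simp [hγdef]
    simp [hφdef, hufdef, this, ha, hinvA]
  have hφ0 : φ 0 = η v := by
    have : γ 0 = b := by simp [hγdef]
    simp [hφdef, hufdef, this, hb, hinvA]
  have hψ0 : ψ 0 = ⟪G v, A u - A v⟫ := by
    have : γ 0 = b := by simp [hγdef]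
    simp [hψdef, hufdef, this, hb, hinvA, ha]
  have hlt : ψ 0 < ψ c :=
    hψmono (Set.mem_Icc.mpr ⟨le_refl 0, by norm_num⟩)
      (Set.mem_Icc.mpr ⟨le_of_lt hc.1, le_of_lt hc.2⟩) hc.1
  have heq2 : φ 1 - φ 0 = ψ c := by rw [hslope]; ring
  rw [hφ1, hφ0] at heq2
  rw [hψ0] at hlt
  linarith

/-- Quantitative lower bound near the diagonal. -/
lemma near_diag (A G : EuclideanSpace ℝ (Fin n) → EuclideanSpace ℝ (Fin n))
    (η : EuclideanSpace ℝ (Fin n) → ℝ)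
    (hAreg : ContDiff ℝ 2 A) (hηreg : ContDiff ℝ (⊤ : ℕ∞) η)
    (hGreg : ContDiff ℝ (⊤ : ℕ∞) G)
    (hH2η : ∀ w ξ, fderiv ℝ η w ξ = ⟪G w, fderiv ℝ A w ξ⟫)
    (r lam LG CA2 : ℝ)
    (hlam : ∀ w ξ : EuclideanSpace ℝ (Fin n), ‖w‖ ≤ r →
      lam * ‖ξ‖^2 ≤ fderiv ℝ (fderiv ℝ η) w ξ ξ - ⟪G w, fderiv ℝ (fderiv ℝ A) w ξ ξ⟫)
    (hLG : ∀ w₁ w₂ : EuclideanSpace ℝ (Fin n), ‖w₁‖ ≤ r → ‖w₂‖ ≤ r →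
      ‖G w₁ - G w₂‖ ≤ LG * ‖w₁ - w₂‖)
    (hCA2 : ∀ w : EuclideanSpace ℝ (Fin n), ‖w‖ ≤ r → ‖fderiv ℝ (fderiv ℝ A) w‖ ≤ CA2)
    (hLGpos : 0 ≤ LG) (hCA2pos : 0 ≤ CA2)
    (u v : EuclideanSpace ℝ (Fin n)) (hu : ‖u‖ ≤ r) (hv : ‖v‖ ≤ r)
    (hsmall : LG * CA2 * ‖u - v‖ ≤ lam / 2) :
    (lam / 4) * ‖u - v‖^2 ≤ η u - η v - ⟪G v, A u - A v⟫ := by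
  have hη2 : ContDiff ℝ 2 η := hηreg.of_le (WithTop.coe_le_coe.mpr le_top)
  set ξ : EuclideanSpace ℝ (Fin n) := u - v with hξdef
  set w : ℝ → EuclideanSpace ℝ (Fin n) := fun t => v + t • ξ with hwdef
  have hwseg : ∀ t ∈ Set.Icc (0:ℝ) 1, ‖w t‖ ≤ r := by
    intro t ht
    have hwt : w t = (1 - t) • v + t • u := by
      simp only [hwdef, hξdef, smul_sub, sub_smul, one_smul]; abel
    rw [hwt]
    calc ‖(1 - t) • v + t • u‖ ≤ ‖(1-t) • v‖ + ‖t • u‖ := norm_add_le _ _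
      _ = (1-t) * ‖v‖ + t * ‖u‖ := by
          rw [norm_smul, norm_smul, Real.norm_eq_abs, Real.norm_eq_abs,
            abs_of_nonneg (by linarith [ht.2]), abs_of_nonneg ht.1]
      _ ≤ (1-t) * r + t * r := by
          have h1 : (0:ℝ) ≤ 1 - t := by linarith [ht.2]
          exact add_le_add (mul_le_mul_of_nonneg_left hv h1)
            (mul_le_mul_of_nonneg_left hu ht.1)
      _ = r := by ring
  have hwd : ∀ t, HasDerivAt w ξ t := fun t => hasDerivAt_line v ξ t
  set g : ℝ → ℝ := fun t => fderiv ℝ η (w t) ξ - ⟪G v, fderiv ℝ A (w t) ξ⟫ with hgdef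
  set f : ℝ → ℝ := fun t => η (w t) - η v - ⟪G v, A (w t) - A v⟫ with hfdef
  have hfd : ∀ t, HasDerivAt f (g t) t := by
    intro t
    have h1 : HasDerivAt (fun s => η (w s)) (fderiv ℝ η (w t) ξ) t := by
      have := ((hη2.differentiable two_ne_zero) (w t)).hasFDerivAt.comp_hasDerivAt t (hwd t)
      simpa [Function.comp_def] using this
    have hAd : HasDerivAt (fun s => A (w s)) (fderiv ℝ A (w t) ξ) t := by
      have := ((hAreg.differentiable two_ne_zero) (w t)).hasFDerivAt.comp_hasDerivAt t (hwd t)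
      simpa [Function.comp_def] using this
    have h2 : HasDerivAt (fun s => (⟪G v, A (w s)⟫ : ℝ)) (⟪G v, fderiv ℝ A (w t) ξ⟫) t := by
      have := HasDerivAt.inner ℝ (hasDerivAt_const t (G v)) hAd
      simpa using this
    have h3 : HasDerivAt (fun s => η (w s) - η v - (⟪G v, A (w s)⟫ - ⟪G v, A v⟫))
        (fderiv ℝ η (w t) ξ - ⟪G v, fderiv ℝ A (w t) ξ⟫) t := by
      have := (h1.sub (hasDerivAt_const t (η v))).sub
        (h2.sub (hasDerivAt_const t (⟪G v, A v⟫ : ℝ)))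
      simp only [sub_zero] at this
      exact this
    have : f = fun s => η (w s) - η v - (⟪G v, A (w s)⟫ - ⟪G v, A v⟫) := by
      funext s; simp [hfdef, inner_sub_right]
    rw [this]
    exact h3
  have hgd : ∀ t, HasDerivAt g
      (fderiv ℝ (fderiv ℝ η) (w t) ξ ξ - ⟪G v, fderiv ℝ (fderiv ℝ A) (w t) ξ ξ⟫) t := by
    intro t
    have h1 := hasDerivAt_fderiv_apply η hη2 w ξ t (hwd t) ξ
    have h2 := hasDerivAt_fderiv_apply A hAreg w ξ t (hwd t) ξ
    have h3 : HasDerivAt (fun s => (⟪G v, fderiv ℝ A (w s) ξ⟫ : ℝ))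
        (⟪G v, fderiv ℝ (fderiv ℝ A) (w t) ξ ξ⟫) t := by
      have := HasDerivAt.inner ℝ (hasDerivAt_const t (G v)) h2
      simpa using this
    exact h1.sub h3
  -- lower bound for g'
  have hg'bound : ∀ t ∈ Set.Icc (0:ℝ) 1,
      (lam/2) * ‖ξ‖^2 ≤ fderiv ℝ (fderiv ℝ η) (w t) ξ ξ - ⟪G v, fderiv ℝ (fderiv ℝ A) (w t) ξ ξ⟫ := by
    intro t ht
    have hwt := hwseg t ht
    have hmain := hlam (w t) ξ hwt
    have hsplit : fderiv ℝ (fderiv ℝ η) (w t) ξ ξ - ⟪G v, fderiv ℝ (fderiv ℝ A) (w t) ξ ξ⟫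
        = (fderiv ℝ (fderiv ℝ η) (w t) ξ ξ - ⟪G (w t), fderiv ℝ (fderiv ℝ A) (w t) ξ ξ⟫)
          + ⟪G (w t) - G v, fderiv ℝ (fderiv ℝ A) (w t) ξ ξ⟫ := by
      rw [inner_sub_left]; ring
    have herr : |(⟪G (w t) - G v, fderiv ℝ (fderiv ℝ A) (w t) ξ ξ⟫ : ℝ)|
        ≤ (LG * CA2 * ‖ξ‖) * ‖ξ‖^2 := by
      calc |(⟪G (w t) - G v, fderiv ℝ (fderiv ℝ A) (w t) ξ ξ⟫ : ℝ)|
          ≤ ‖G (w t) - G v‖ * ‖fderiv ℝ (fderiv ℝ A) (w t) ξ ξ‖ := abs_real_inner_le_norm _ _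
        _ ≤ (LG * ‖w t - v‖) * (CA2 * ‖ξ‖ * ‖ξ‖) := by
            apply mul_le_mul (hLG _ _ hwt hv)
            · calc ‖fderiv ℝ (fderiv ℝ A) (w t) ξ ξ‖
                  ≤ ‖fderiv ℝ (fderiv ℝ A) (w t)‖ * ‖ξ‖ * ‖ξ‖ := ContinuousLinearMap.le_opNorm₂ _ _ _
                _ ≤ CA2 * ‖ξ‖ * ‖ξ‖ := by
                    apply mul_le_mul_of_nonneg_right _ (norm_nonneg ξ)
                    exact mul_le_mul_of_nonneg_right (hCA2 _ hwt) (norm_nonneg ξ)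
            · positivity
            · positivity
        _ ≤ (LG * ‖ξ‖) * (CA2 * ‖ξ‖ * ‖ξ‖) := by
            have : ‖w t - v‖ ≤ ‖ξ‖ := by
              have : w t - v = t • ξ := by simp [hwdef]
              rw [this, norm_smul, Real.norm_eq_abs, abs_of_nonneg ht.1]
              nlinarith [norm_nonneg ξ, ht.2]
            have h0 : (0:ℝ) ≤ CA2 * ‖ξ‖ * ‖ξ‖ := by positivity
            apply mul_le_mul_of_nonneg_right _ h0
            exact mul_le_mul_of_nonneg_left this hLGpos
        _ = (LG * CA2 * ‖ξ‖) * ‖ξ‖^2 := by ring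
    have hsmall' : (LG * CA2 * ‖ξ‖) * ‖ξ‖^2 ≤ (lam/2) * ‖ξ‖^2 := by
      apply mul_le_mul_of_nonneg_right hsmall (by positivity)
    rw [hsplit]
    have := abs_le.mp herr
    linarith [this.1]
  -- integrate twice
  have hg0 : g 0 = 0 := by
    have : w 0 = v := by simp [hwdef]
    simp [hgdef, this, hH2η]
  have hgC : ∀ t ∈ Set.Icc (0:ℝ) 1, (lam/2) * ‖ξ‖^2 * t ≤ g t := by
    intro t ht
    have := Convex.mul_sub_le_image_sub_of_le_deriv (convex_Icc (0:ℝ) 1)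
      (fun s _ => (hgd s).differentiableAt.continuousAt.continuousWithinAt)
      (fun s hs => (hgd s).differentiableAt.differentiableWithinAt)
      (fun s hs => by
        rw [(hgd s).deriv]
        exact hg'bound s (interior_subset hs))
      0 (Set.mem_Icc.mpr ⟨le_refl 0, zero_le_one⟩) t ht ht.1
    rw [hg0] at this
    linarith [this]
  set C : ℝ := (lam/2) * ‖ξ‖^2 with hCdef
  set F : ℝ → ℝ := fun t => f t - (C/2) * t^2 with hFdef
  have hFd : ∀ t, HasDerivAt F (g t - C * t) t := by
    intro t
    have h1 : HasDerivAt (fun s : ℝ => (C/2) * s^2) (C * t) t := by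
      have := (hasDerivAt_pow 2 t).const_mul (C/2)
      simpa using this.congr_deriv (by ring)
    exact (hfd t).sub h1
  have hF : (0:ℝ) * (1 - 0) ≤ F 1 - F 0 := by
    apply Convex.mul_sub_le_image_sub_of_le_deriv (convex_Icc (0:ℝ) 1)
      (fun s _ => (hFd s).differentiableAt.continuousAt.continuousWithinAt)
      (fun s hs => (hFd s).differentiableAt.differentiableWithinAt)
      (fun s hs => by
        rw [(hFd s).deriv]
        rw [interior_Icc] at hs
        have := hgC s ⟨le_of_lt hs.1, le_of_lt hs.2⟩
        linarith)
      0 (Set.mem_Icc.mpr ⟨le_refl 0, zero_le_one⟩) 1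
      (Set.mem_Icc.mpr ⟨zero_le_one, le_refl 1⟩) zero_le_one
  have hF0 : F 0 = 0 := by
    have : w 0 = v := by simp [hwdef]
    simp [hFdef, hfdef, this]
  have hf1 : f 1 = η u - η v - ⟪G v, A u - A v⟫ := by
    have : w 1 = u := by simp [hwdef, hξdef]
    simp [hfdef, this]
  have : F 1 = f 1 - C/2 := by simp [hFdef]
  rw [hF0, this, hf1] at hF
  have : (lam/4) * ‖u - v‖^2 = C/2 := by rw [hCdef, hξdef]; ring
  linarith [hF, this.le, this.ge]
set_option maxHeartbeats 1600000 in
/-- **Lemma A.2 (norm-like lower bound for the relative entropy).**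
Under hypotheses (H1), (H2), (H3) and the growth assumptions (A1), (A2), (A3),
one may select `R > M + 1` and constants `c₁, c₂ > 0` depending on `M` such that
`η(u|ū) ≥ c₁ |u − ū|²` for `|u| ≤ R`, `|ū| ≤ M`, and `η(u|ū) ≥ c₂ |u − ū|^p`
for `|u| ≥ R`, `|ū| ≤ M`. -/
theorem relative_entropy_norm_like_lower_bound
    (n d : ℕ) (p : ℝ) (hp : 1 < p)
    (A : EuclideanSpace ℝ (Fin n) → EuclideanSpace ℝ (Fin n))
    (F : Fin d → EuclideanSpace ℝ (Fin n) → EuclideanSpace ℝ (Fin n))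
    (η : EuclideanSpace ℝ (Fin n) → ℝ)
    (q : Fin d → EuclideanSpace ℝ (Fin n) → ℝ)
    (G : EuclideanSpace ℝ (Fin n) → EuclideanSpace ℝ (Fin n))
    -- smoothness of the constitutive functions
    (hAreg : ContDiff ℝ 2 A) (hFreg : ∀ α, ContDiff ℝ (⊤ : ℕ∞) (F α))
    (hηreg : ContDiff ℝ (⊤ : ℕ∞) η) (hqreg : ∀ α, ContDiff ℝ (⊤ : ℕ∞) (q α))
    (hGreg : ContDiff ℝ (⊤ : ℕ∞) G)
    -- (H1): A is globally invertible with nonsingular differential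
    (hH1 : Function.Bijective A)
    (hH1' : ∀ w, Function.Bijective (fderiv ℝ A w))
    -- (H2): entropy pair with multiplier G
    (hH2η : ∀ w ξ, fderiv ℝ η w ξ = ⟪G w, fderiv ℝ A w ξ⟫)
    (hH2q : ∀ α w ξ, fderiv ℝ (q α) w ξ = ⟪G w, fderiv ℝ (F α) w ξ⟫)
    -- (H3): ∇²η(u) − G(u)·∇²A(u) is positive definite
    (hH3 : ∀ w (ξ : EuclideanSpace ℝ (Fin n)), ξ ≠ 0 →
      0 < iteratedFDeriv ℝ 2 η w ![ξ, ξ] - ⟪G w, iteratedFDeriv ℝ 2 A w ![ξ, ξ]⟫)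
    -- (A1): growth of the entropy
    (β₁ β₂ B : ℝ) (hβ₁ : 0 < β₁) (hβ₂ : 0 < β₂) (hB : 0 < B)
    (hA1 : ∀ w : EuclideanSpace ℝ (Fin n),
      β₁ * (‖w‖ ^ p + 1) - B ≤ η w ∧ η w ≤ β₂ * (‖w‖ ^ p + 1))
    -- (A2): |F_α(u)|/η(u) = o(1) as |u| → ∞
    (hA2 : ∀ α, ∀ ε > (0:ℝ), ∃ R₀, ∀ w : EuclideanSpace ℝ (Fin n),
      R₀ ≤ ‖w‖ → ‖F α w‖ ≤ ε * η w)
    -- (A3): |A(u)|/η(u) = o(1) as |u| → ∞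
    (hA3 : ∀ ε > (0:ℝ), ∃ R₀, ∀ w : EuclideanSpace ℝ (Fin n),
      R₀ ≤ ‖w‖ → ‖A w‖ ≤ ε * η w)
    (M : ℝ) (hM : 0 < M) :
    ∃ R > M + 1, ∃ c₁ > (0:ℝ), ∃ c₂ > (0:ℝ),
      ∀ u ubar : EuclideanSpace ℝ (Fin n), ‖ubar‖ ≤ M →
        (‖u‖ ≤ R →
          c₁ * ‖u - ubar‖ ^ 2 ≤ η u - η ubar - ⟪G ubar, A u - A ubar⟫) ∧
        (R ≤ ‖u‖ →
          c₂ * ‖u - ubar‖ ^ p ≤ η u - η ubar - ⟪G ubar, A u - A ubar⟫) := by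
  classical
  have hp0 : (0:ℝ) < p := lt_trans one_pos hp
  rcases subsingleton_or_nontrivial (EuclideanSpace ℝ (Fin n)) with hsub | hnt
  · -- trivial case: the space is a single point
    refine ⟨M + 2, by linarith, 1, one_pos, 1, one_pos, fun u ubar _ => ?_⟩
    have huu : u = ubar := Subsingleton.elim u ubar
    subst huu
    constructor <;> intro _ <;>
      simp [sub_self, Real.zero_rpow (ne_of_gt hp0)]
  -- constants bounding G, A, η on the ball of radius M
  obtain ⟨Cg', hCg'⟩ := (isCompact_closedBall (0 : EuclideanSpace ℝ (Fin n)) M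
    ).exists_bound_of_continuousOn (hGreg.continuous.continuousOn)
  obtain ⟨Ca', hCa'⟩ := (isCompact_closedBall (0 : EuclideanSpace ℝ (Fin n)) M
    ).exists_bound_of_continuousOn (hAreg.continuous.continuousOn)
  obtain ⟨Ce', hCe'⟩ := (isCompact_closedBall (0 : EuclideanSpace ℝ (Fin n)) M
    ).exists_bound_of_continuousOn (hηreg.continuous.continuousOn)
  obtain ⟨Cg, hCgdef⟩ : ∃ x : ℝ, x = max Cg' 0 := ⟨_, rfl⟩
  obtain ⟨Ca, hCadef⟩ : ∃ x : ℝ, x = max Ca' 0 := ⟨_, rfl⟩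
  obtain ⟨Ce, hCedef⟩ : ∃ x : ℝ, x = max Ce' 0 := ⟨_, rfl⟩
  have hCg : ∀ v : EuclideanSpace ℝ (Fin n), ‖v‖ ≤ M → ‖G v‖ ≤ Cg := fun v hv =>
    hCgdef ▸ le_trans (hCg' v (mem_closedBall_zero_iff.mpr hv)) (le_max_left _ _)
  have hCa : ∀ v : EuclideanSpace ℝ (Fin n), ‖v‖ ≤ M → ‖A v‖ ≤ Ca := fun v hv =>
    hCadef ▸ le_trans (hCa' v (mem_closedBall_zero_iff.mpr hv)) (le_max_left _ _)
  have hCe : ∀ v : EuclideanSpace ℝ (Fin n), ‖v‖ ≤ M → |η v| ≤ Ce := fun v hv =>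
    hCedef ▸ le_trans (hCe' v (mem_closedBall_zero_iff.mpr hv)) (le_max_left _ _)
  have hCg0 : 0 ≤ Cg := hCgdef ▸ le_max_right _ _
  have hCa0 : 0 ≤ Ca := hCadef ▸ le_max_right _ _
  have hCe0 : 0 ≤ Ce := hCedef ▸ le_max_right _ _
  -- radius from (A3)
  obtain ⟨ε, hεdef⟩ : ∃ x : ℝ, x = 1 / (2 * (Cg + 1)) := ⟨_, rfl⟩
  have hεpos : 0 < ε := by rw [hεdef]; positivity
  obtain ⟨R₀, hR₀⟩ := hA3 ε hεpos
  -- choice of R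
  obtain ⟨K₀, hK₀def⟩ : ∃ x : ℝ, x = B/2 + Ce + Cg * Ca + 1 := ⟨_, rfl⟩
  have hK₀pos : 0 < K₀ := by rw [hK₀def]; positivity
  obtain ⟨T, hTdef⟩ : ∃ x : ℝ, x = 4 * K₀ / β₁ := ⟨_, rfl⟩
  have hTpos : 0 < T := by rw [hTdef]; positivity
  obtain ⟨R, hRdef⟩ : ∃ x : ℝ, x = max (max (R₀ + 1) (M + 2)) (T ^ (1/p)) := ⟨_, rfl⟩
  have hRmax : M + 2 ≤ R := by
    rw [hRdef]; exact le_trans (le_max_right _ _) (le_max_left _ _)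
  have hRmax0 : R₀ + 1 ≤ R := by
    rw [hRdef]; exact le_trans (le_max_left _ _) (le_max_left _ _)
  have hRmaxT : T ^ (1/p) ≤ R := by rw [hRdef]; exact le_max_right _ _
  have hRM : M + 1 < R := by linarith
  have hRpos : 0 < R := by linarith
  have hRT : T ≤ R ^ p := by
    have h1 : T ^ (1/p) ≤ R := hRmaxT
    have h2 : (T ^ (1/p)) ^ p ≤ R ^ p :=
      Real.rpow_le_rpow (Real.rpow_nonneg hTpos.le _) h1 hp0.le
    rwa [← Real.rpow_mul hTpos.le, one_div_mul_cancel (ne_of_gt hp0),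
      Real.rpow_one] at h2
  -- the far-field constant
  obtain ⟨c₂, hc₂def⟩ : ∃ x : ℝ, x = β₁ / (4 * (2:ℝ) ^ p) := ⟨_, rfl⟩
  have hc₂pos : 0 < c₂ := by
    have : (0:ℝ) < (2:ℝ) ^ p := Real.rpow_pos_of_pos two_pos p
    rw [hc₂def]; positivity
  have hfar : ∀ u v : EuclideanSpace ℝ (Fin n), ‖v‖ ≤ M → R ≤ ‖u‖ →
      c₂ * ‖u - v‖ ^ p ≤ η u - η v - ⟪G v, A u - A v⟫ := by
    intro u v hv hu
    have hup : R ^ p ≤ ‖u‖ ^ p := Real.rpow_le_rpow hRpos.le hu hp0.le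
    have hβu : 4 * K₀ ≤ β₁ * ‖u‖ ^ p := by
      have := mul_le_mul_of_nonneg_left (le_trans hRT hup) hβ₁.le
      calc (4:ℝ) * K₀ = β₁ * T := by rw [hTdef]; field_simp
        _ ≤ β₁ * ‖u‖ ^ p := this
    have hηu : β₁ * (‖u‖ ^ p + 1) - B ≤ η u := (hA1 u).1
    have hexp : β₁ * (‖u‖ ^ p + 1) = β₁ * ‖u‖ ^ p + β₁ := by ring
    have hK₀eq : K₀ = B/2 + Ce + Cg * Ca + 1 := hK₀def
    have h2B : 2 * B ≤ 4 * K₀ := by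
      have hcgca : 0 ≤ Cg * Ca := mul_nonneg hCg0 hCa0
      linarith
    have hηu0 : 0 ≤ η u := by linarith [hexp, hβ₁.le]
    have hAu : ‖A u‖ ≤ ε * η u := hR₀ u (by linarith)
    have hinner : ⟪G v, A u - A v⟫ ≤ Cg * ‖A u‖ + Cg * Ca := by
      calc (⟪G v, A u - A v⟫ : ℝ) ≤ ‖G v‖ * ‖A u - A v‖ := real_inner_le_norm _ _
        _ ≤ Cg * (‖A u‖ + Ca) := by
            apply mul_le_mul (hCg v hv) _ (norm_nonneg _) hCg0
            exact le_trans (norm_sub_le _ _) (add_le_add_right (hCa v hv) _)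
        _ = Cg * ‖A u‖ + Cg * Ca := by ring
    have hGAu : Cg * ‖A u‖ ≤ η u / 2 := by
      have h1 : Cg * ‖A u‖ ≤ Cg * (ε * η u) :=
        mul_le_mul_of_nonneg_left hAu hCg0
      have h2 : Cg * ε ≤ 1/2 := by
        rw [hεdef]
        have h3 : Cg / (2 * (Cg + 1)) ≤ 1/2 := by
          rw [div_le_div_iff₀ (by positivity) (by norm_num)]
          nlinarith
        calc Cg * (1 / (2 * (Cg + 1))) = Cg / (2 * (Cg + 1)) := by ring
          _ ≤ 1/2 := h3
      calc Cg * ‖A u‖ ≤ Cg * (ε * η u) := h1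
        _ = (Cg * ε) * η u := by ring
        _ ≤ (1/2) * η u := mul_le_mul_of_nonneg_right h2 hηu0
        _ = η u / 2 := by ring
    have hεv : |η v| ≤ Ce := hCe v hv
    have hmain : (β₁/4) * ‖u‖ ^ p ≤ η u - η v - ⟪G v, A u - A v⟫ := by
      have habs := abs_le.mp hεv
      linarith [hβu, hηu, hexp, hinner, hGAu, habs.1, habs.2, hβ₁.le]
    have huv2 : ‖u - v‖ ≤ 2 * ‖u‖ := by
      have hMu : M ≤ ‖u‖ := by linarith
      calc ‖u - v‖ ≤ ‖u‖ + ‖v‖ := norm_sub_le _ _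
        _ ≤ 2 * ‖u‖ := by linarith
    have huvp : ‖u - v‖ ^ p ≤ (2:ℝ) ^ p * ‖u‖ ^ p := by
      calc ‖u - v‖ ^ p ≤ (2 * ‖u‖) ^ p :=
            Real.rpow_le_rpow (norm_nonneg _) huv2 hp0.le
        _ = (2:ℝ) ^ p * ‖u‖ ^ p := Real.mul_rpow two_pos.le (norm_nonneg _)
    calc c₂ * ‖u - v‖ ^ p ≤ c₂ * ((2:ℝ) ^ p * ‖u‖ ^ p) :=
          mul_le_mul_of_nonneg_left huvp hc₂pos.le
      _ = (β₁/4) * ‖u‖ ^ p := by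
          rw [hc₂def]
          have h2p : (0:ℝ) < (2:ℝ) ^ p := Real.rpow_pos_of_pos two_pos p
          field_simp
      _ ≤ η u - η v - ⟪G v, A u - A v⟫ := hmain
  -- second derivatives are continuous
  have hη2 : ContDiff ℝ 2 η := hηreg.of_le (WithTop.coe_le_coe.mpr le_top)
  have hD2η : Continuous (fderiv ℝ (fderiv ℝ η)) :=
    (hη2.fderiv_right (m := 1) (by norm_num)).continuous_fderiv one_ne_zero
  have hD2A : Continuous (fderiv ℝ (fderiv ℝ A)) :=
    (hAreg.fderiv_right (m := 1) (by norm_num)).continuous_fderiv one_ne_zero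
  have hQcont : Continuous (fun q : EuclideanSpace ℝ (Fin n) × EuclideanSpace ℝ (Fin n) =>
      fderiv ℝ (fderiv ℝ η) q.1 q.2 q.2 - ⟪G q.1, fderiv ℝ (fderiv ℝ A) q.1 q.2 q.2⟫) := by
    apply Continuous.sub
    · exact ((hD2η.comp continuous_fst).clm_apply continuous_snd).clm_apply continuous_snd
    · exact Continuous.inner (hGreg.continuous.comp continuous_fst)
        (((hD2A.comp continuous_fst).clm_apply continuous_snd).clm_apply continuous_snd)
  -- positivity of the quadratic form, pointwise
  have hH3' : ∀ w ξ : EuclideanSpace ℝ (Fin n), ξ ≠ 0 →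
      0 < fderiv ℝ (fderiv ℝ η) w ξ ξ - ⟪G w, fderiv ℝ (fderiv ℝ A) w ξ ξ⟫ := by
    intro w ξ hξ
    have h3 := hH3 w ξ hξ
    rw [iteratedFDeriv_two_apply, iteratedFDeriv_two_apply] at h3
    simpa only [Matrix.cons_val_zero, Matrix.cons_val_one, Matrix.head_cons] using h3
  -- minimum of the quadratic form over the compact set (ball R) × (unit sphere)
  obtain ⟨x₀, hx₀⟩ := NormedSpace.sphere_nonempty
    (E := EuclideanSpace ℝ (Fin n)) (x := 0) (r := 1) |>.mpr zero_le_one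
  obtain ⟨q₀, hq₀mem, hq₀min⟩ :=
    ((isCompact_closedBall (0 : EuclideanSpace ℝ (Fin n)) R).prod
      (isCompact_sphere (0 : EuclideanSpace ℝ (Fin n)) 1)).exists_isMinOn
      ⟨(0, x₀), Set.mem_prod.mpr ⟨Metric.mem_closedBall_self hRpos.le, hx₀⟩⟩
      hQcont.continuousOn
  obtain ⟨lam, hlamdef⟩ : ∃ x : ℝ,
      x = fderiv ℝ (fderiv ℝ η) q₀.1 q₀.2 q₀.2 - ⟪G q₀.1, fderiv ℝ (fderiv ℝ A) q₀.1 q₀.2 q₀.2⟫ :=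
    ⟨_, rfl⟩
  have hq₀2 : ‖q₀.2‖ = 1 := mem_sphere_zero_iff_norm.mp (Set.mem_prod.mp hq₀mem).2
  have hlampos : 0 < lam := by
    rw [hlamdef]
    exact hH3' q₀.1 q₀.2 (by intro h; rw [h] at hq₀2; simp at hq₀2)
  -- scaling of the quadratic form
  have hscale : ∀ (w : EuclideanSpace ℝ (Fin n)) (c : ℝ) (ζ : EuclideanSpace ℝ (Fin n)),
      fderiv ℝ (fderiv ℝ η) w (c • ζ) (c • ζ) - ⟪G w, fderiv ℝ (fderiv ℝ A) w (c • ζ) (c • ζ)⟫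
      = c^2 * (fderiv ℝ (fderiv ℝ η) w ζ ζ - ⟪G w, fderiv ℝ (fderiv ℝ A) w ζ ζ⟫) := by
    intro w c ζ
    simp only [_root_.map_smul, ContinuousLinearMap.smul_apply, smul_eq_mul,
      real_inner_smul_right, smul_smul]
    ring
  -- uniform coercivity on the ball of radius R
  have hlam_bound : ∀ w ξ : EuclideanSpace ℝ (Fin n), ‖w‖ ≤ R →
      lam * ‖ξ‖^2 ≤ fderiv ℝ (fderiv ℝ η) w ξ ξ - ⟪G w, fderiv ℝ (fderiv ℝ A) w ξ ξ⟫ := by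
    intro w ξ hw
    rcases eq_or_ne ξ 0 with h0 | h0
    · subst h0; simp
    · have hnorm : ‖ξ‖ ≠ 0 := norm_ne_zero_iff.mpr h0
      have hζ : ‖(‖ξ‖⁻¹ • ξ)‖ = 1 := by
        rw [norm_smul, norm_inv, norm_norm, inv_mul_cancel₀ hnorm]
      have hmin : lam ≤ fderiv ℝ (fderiv ℝ η) w (‖ξ‖⁻¹ • ξ) (‖ξ‖⁻¹ • ξ)
          - ⟪G w, fderiv ℝ (fderiv ℝ A) w (‖ξ‖⁻¹ • ξ) (‖ξ‖⁻¹ • ξ)⟫ := by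
        rw [hlamdef]
        have := isMinOn_iff.mp hq₀min (w, ‖ξ‖⁻¹ • ξ) (Set.mem_prod.mpr
          ⟨mem_closedBall_zero_iff.mpr hw, mem_sphere_zero_iff_norm.mpr hζ⟩)
        simpa using this
      have hrecover : ξ = ‖ξ‖ • (‖ξ‖⁻¹ • ξ) := (smul_inv_smul₀ hnorm ξ).symm
      calc lam * ‖ξ‖^2 ≤ (fderiv ℝ (fderiv ℝ η) w (‖ξ‖⁻¹ • ξ) (‖ξ‖⁻¹ • ξ)
              - ⟪G w, fderiv ℝ (fderiv ℝ A) w (‖ξ‖⁻¹ • ξ) (‖ξ‖⁻¹ • ξ)⟫) * ‖ξ‖^2 := by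
            apply mul_le_mul_of_nonneg_right hmin (by positivity)
        _ = fderiv ℝ (fderiv ℝ η) w ξ ξ - ⟪G w, fderiv ℝ (fderiv ℝ A) w ξ ξ⟫ := by
            have h := hscale w ‖ξ‖ (‖ξ‖⁻¹ • ξ)
            rw [← hrecover] at h
            rw [h]
            ring
  -- Lipschitz constant of G and bound on D²A on the ball of radius R
  obtain ⟨LG', hLG'⟩ := (isCompact_closedBall (0 : EuclideanSpace ℝ (Fin n)) R
    ).exists_bound_of_continuousOn
    ((hGreg.continuous_fderiv (by simp)).continuousOn)
  obtain ⟨LG, hLGdef⟩ : ∃ x : ℝ, x = max LG' 0 := ⟨_, rfl⟩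
  have hLG0 : 0 ≤ LG := hLGdef ▸ le_max_right _ _
  have hGlip : ∀ w₁ w₂ : EuclideanSpace ℝ (Fin n), ‖w₁‖ ≤ R → ‖w₂‖ ≤ R →
      ‖G w₁ - G w₂‖ ≤ LG * ‖w₁ - w₂‖ := by
    intro w₁ w₂ h1 h2
    exact Convex.norm_image_sub_le_of_norm_fderiv_le
      (fun x _ => (hGreg.differentiable (by simp)) x)
      (fun x hx => le_trans (hLG' x hx) (hLGdef ▸ le_max_left _ _))
      (convex_closedBall 0 R) (mem_closedBall_zero_iff.mpr h2) (mem_closedBall_zero_iff.mpr h1)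
  obtain ⟨CA2', hCA2'⟩ := (isCompact_closedBall (0 : EuclideanSpace ℝ (Fin n)) R
    ).exists_bound_of_continuousOn
      (E := EuclideanSpace ℝ (Fin n) →L[ℝ] EuclideanSpace ℝ (Fin n) →L[ℝ] EuclideanSpace ℝ (Fin n))
      (f := fderiv ℝ (fderiv ℝ A)) hD2A.continuousOn
  obtain ⟨CA2, hCA2def⟩ : ∃ x : ℝ, x = max CA2' 0 := ⟨_, rfl⟩
  have hCA20 : 0 ≤ CA2 := hCA2def ▸ le_max_right _ _
  have hCA2R : ∀ w : EuclideanSpace ℝ (Fin n), ‖w‖ ≤ R → ‖fderiv ℝ (fderiv ℝ A) w‖ ≤ CA2 :=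
    fun w hw => hCA2def ▸ le_trans (hCA2' w (mem_closedBall_zero_iff.mpr hw)) (le_max_left _ _)
  -- choice of δ
  obtain ⟨δ, hδdef⟩ : ∃ x : ℝ, x = min 1 (lam / (2 * (LG * CA2 + 1))) := ⟨_, rfl⟩
  have hδpos : 0 < δ := by
    rw [hδdef]
    exact lt_min one_pos (by positivity)
  -- the near-diagonal estimate
  have hMR : M ≤ R := by linarith
  have hnear : ∀ u v : EuclideanSpace ℝ (Fin n), ‖v‖ ≤ M → ‖u‖ ≤ R → ‖u - v‖ ≤ δ →
      (lam/4) * ‖u - v‖^2 ≤ η u - η v - ⟪G v, A u - A v⟫ := by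
    intro u v hv hu huvδ
    apply near_diag A G η hAreg hηreg hGreg hH2η R lam LG CA2 hlam_bound hGlip hCA2R
      hLG0 hCA20 u v hu (le_trans hv hMR)
    have hd : δ ≤ lam / (2 * (LG * CA2 + 1)) := hδdef ▸ min_le_right _ _
    have hK : (0:ℝ) ≤ LG * CA2 := mul_nonneg hLG0 hCA20
    have h1 : LG * CA2 * ‖u - v‖ ≤ LG * CA2 * (lam / (2 * (LG * CA2 + 1))) :=
      mul_le_mul_of_nonneg_left (le_trans huvδ hd) hK
    have h2 : LG * CA2 * (lam / (2 * (LG * CA2 + 1))) ≤ lam / 2 := by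
      rw [mul_div_assoc', div_le_div_iff₀ (by positivity) two_pos]
      nlinarith [hlampos.le, hK]
    linarith
  -- the off-diagonal estimate via compactness and strict positivity
  have hecont : Continuous (fun q : EuclideanSpace ℝ (Fin n) × EuclideanSpace ℝ (Fin n) =>
      η q.1 - η q.2 - ⟪G q.2, A q.1 - A q.2⟫) := by
    apply Continuous.sub
    · exact (hηreg.continuous.comp continuous_fst).sub (hηreg.continuous.comp continuous_snd)
    · exact Continuous.inner (hGreg.continuous.comp continuous_snd)
        ((hAreg.continuous.comp continuous_fst).sub (hAreg.continuous.comp continuous_snd))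
  have hoff : ∃ cf > (0:ℝ), ∀ u v : EuclideanSpace ℝ (Fin n), ‖v‖ ≤ M → ‖u‖ ≤ R →
      δ ≤ ‖u - v‖ → cf * ‖u - v‖^2 ≤ η u - η v - ⟪G v, A u - A v⟫ := by
    by_cases hSne : (((Metric.closedBall (0 : EuclideanSpace ℝ (Fin n)) R) ×ˢ
        (Metric.closedBall (0 : EuclideanSpace ℝ (Fin n)) M)) ∩
        {q : EuclideanSpace ℝ (Fin n) × EuclideanSpace ℝ (Fin n) |
          δ ≤ ‖q.1 - q.2‖}).Nonempty
    · have hScomp : IsCompact (((Metric.closedBall (0 : EuclideanSpace ℝ (Fin n)) R) ×ˢ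
          (Metric.closedBall (0 : EuclideanSpace ℝ (Fin n)) M)) ∩
          {q : EuclideanSpace ℝ (Fin n) × EuclideanSpace ℝ (Fin n) | δ ≤ ‖q.1 - q.2‖}) := by
        apply IsCompact.inter_right
        · exact (isCompact_closedBall _ _).prod (isCompact_closedBall _ _)
        · exact isClosed_le continuous_const ((continuous_fst.sub continuous_snd).norm)
      obtain ⟨q₁, hq₁S, hq₁min⟩ := hScomp.exists_isMinOn hSne hecont.continuousOn
      have hq₁ne : q₁.1 ≠ q₁.2 := by
        intro h
        have hd : δ ≤ ‖q₁.1 - q₁.2‖ := hq₁S.2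
        rw [h, sub_self, norm_zero] at hd
        linarith
      have hm0 : 0 < η q₁.1 - η q₁.2 - ⟪G q₁.2, A q₁.1 - A q₁.2⟫ :=
        relent_pos A G η hAreg hηreg hGreg hH1 hH1' hH2η hH3 q₁.1 q₁.2 hq₁ne
      refine ⟨(η q₁.1 - η q₁.2 - ⟪G q₁.2, A q₁.1 - A q₁.2⟫) / ((R+M)^2 + 1), by positivity, ?_⟩
      intro u v hv hu hδuv
      have hmem : (u, v) ∈ (((Metric.closedBall (0 : EuclideanSpace ℝ (Fin n)) R) ×ˢ
          (Metric.closedBall (0 : EuclideanSpace ℝ (Fin n)) M)) ∩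
          {q : EuclideanSpace ℝ (Fin n) × EuclideanSpace ℝ (Fin n) | δ ≤ ‖q.1 - q.2‖}) :=
        Set.mem_inter (Set.mem_prod.mpr
          ⟨mem_closedBall_zero_iff.mpr hu, mem_closedBall_zero_iff.mpr hv⟩) hδuv
      have hle := isMinOn_iff.mp hq₁min (u, v) hmem
      simp only at hle
      have huvRM : ‖u - v‖ ≤ R + M := le_trans (norm_sub_le _ _) (by linarith)
      have hsq : ‖u - v‖^2 ≤ (R+M)^2 + 1 := by nlinarith [norm_nonneg (u - v)]
      calc (η q₁.1 - η q₁.2 - ⟪G q₁.2, A q₁.1 - A q₁.2⟫) / ((R+M)^2 + 1) * ‖u - v‖^2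
          ≤ (η q₁.1 - η q₁.2 - ⟪G q₁.2, A q₁.1 - A q₁.2⟫) / ((R+M)^2 + 1) * ((R+M)^2 + 1) := by
            apply mul_le_mul_of_nonneg_left hsq (by positivity)
        _ = η q₁.1 - η q₁.2 - ⟪G q₁.2, A q₁.1 - A q₁.2⟫ := by
            field_simp
        _ ≤ η u - η v - ⟪G v, A u - A v⟫ := hle
    · refine ⟨1, one_pos, ?_⟩
      intro u v hv hu hδuv
      exfalso
      apply hSne
      refine ⟨(u, v), Set.mem_inter (Set.mem_prod.mpr
        ⟨mem_closedBall_zero_iff.mpr hu, mem_closedBall_zero_iff.mpr hv⟩) hδuv⟩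
  obtain ⟨cf, hcfpos, hcf⟩ := hoff
  -- final assembly
  refine ⟨R, hRM, min (lam/4) cf, lt_min (by positivity) hcfpos, c₂, hc₂pos,
    fun u ubar hub => ⟨?_, fun hge => hfar u ubar hub hge⟩⟩
  intro hle
  rcases le_or_gt ‖u - ubar‖ δ with hcase | hcase
  · calc min (lam/4) cf * ‖u - ubar‖^2 ≤ (lam/4) * ‖u - ubar‖^2 :=
        mul_le_mul_of_nonneg_right (min_le_left _ _) (by positivity)
      _ ≤ η u - η ubar - ⟪G ubar, A u - A ubar⟫ := hnear u ubar hub hle hcase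
  · calc min (lam/4) cf * ‖u - ubar‖^2 ≤ cf * ‖u - ubar‖^2 :=
        mul_le_mul_of_nonneg_right (min_le_right _ _) (by positivity)
      _ ≤ η u - η ubar - ⟪G ubar, A u - A ubar⟫ := hcf u ubar hub hle hcase.le
end
end

section
/- Relative entropy identity for hyperbolic systems (smooth solutions): Let u and ū be C¹ solutions of the hyperbolic system ∂_t A(u) + Σ_α ∂_{x_α} F_α(u) = 0 on an open subset of ℝ⁺ × ℝ^d, under hypotheses (H1) and (H2), each satisfying the entropy identity ∂_t η + Σ_α ∂_{x_α} q_α = 0. Then the following identity holds pointwise: ∂_t η(u|ū) + Σ_α ∂_{x_α} q_α(u|ū) = − Σ_α ∂_{x_α}(G(ū)) · F_α(u|ū). -/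
open scoped RealInnerProductSpace
open MeasureTheory

noncomputable section

lemma companion_symm {E : Type*} [NormedAddCommGroup E] [InnerProductSpace ℝ E]
    (f : E → ℝ) (B Gm : E → E)
    (hf : ContDiff ℝ 2 f) (hB : ContDiff ℝ 2 B) (hGm : ContDiff ℝ 1 Gm)
    (h : ∀ w ξ, fderiv ℝ f w ξ = ⟪Gm w, fderiv ℝ B w ξ⟫)
    (x ζ ξ : E) :
    ⟪fderiv ℝ Gm x ζ, fderiv ℝ B x ξ⟫ = ⟪fderiv ℝ Gm x ξ, fderiv ℝ B x ζ⟫ := by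
  have hdf : DifferentiableAt ℝ (fderiv ℝ f) x :=
    ((hf.fderiv_right (m := 1) le_rfl).differentiable one_ne_zero).differentiableAt
  have hdB : DifferentiableAt ℝ (fderiv ℝ B) x :=
    ((hB.fderiv_right (m := 1) le_rfl).differentiable one_ne_zero).differentiableAt
  have key : ∀ ζ ξ : E, fderiv ℝ (fderiv ℝ f) x ζ ξ
      = ⟪Gm x, fderiv ℝ (fderiv ℝ B) x ζ ξ⟫ + ⟪fderiv ℝ Gm x ζ, fderiv ℝ B x ξ⟫ := by
    intro ζ ξ
    have h1 : HasFDerivAt (fun w => fderiv ℝ f w ξ)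
        ((ContinuousLinearMap.apply ℝ ℝ ξ).comp (fderiv ℝ (fderiv ℝ f) x)) x :=
      (ContinuousLinearMap.apply ℝ ℝ ξ).hasFDerivAt.comp x hdf.hasFDerivAt
    have h2 : HasFDerivAt (fun w => fderiv ℝ B w ξ)
        ((ContinuousLinearMap.apply ℝ E ξ).comp (fderiv ℝ (fderiv ℝ B) x)) x :=
      (ContinuousLinearMap.apply ℝ E ξ).hasFDerivAt.comp x hdB.hasFDerivAt
    have h3 : HasFDerivAt Gm (fderiv ℝ Gm x) x :=
      ((hGm.differentiable one_ne_zero) x).hasFDerivAt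
    have h4 := h3.inner ℝ h2
    have heq : (fun w => fderiv ℝ f w ξ) = fun w => ⟪Gm w, fderiv ℝ B w ξ⟫ :=
      funext fun w => h w ξ
    rw [← heq] at h4
    have h5 := h1.unique h4
    have h6 := congrFun (congrArg (fun (L : E →L[ℝ] ℝ) => (L : E → ℝ)) h5) ζ
    simpa [fderivInnerCLM_apply, ContinuousLinearMap.apply_apply] using h6
  have hsf : IsSymmSndFDerivAt ℝ f x := hf.contDiffAt.isSymmSndFDerivAt (by norm_num)
  have hsB : IsSymmSndFDerivAt ℝ B x := hB.contDiffAt.isSymmSndFDerivAt (by norm_num)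
  have k1 := key ζ ξ
  have k2 := key ξ ζ
  rw [hsf ζ ξ, hsB ζ ξ] at k1
  linarith

lemma hasDerivAt_time {d : ℕ} {E F : Type*} [NormedAddCommGroup E] [NormedSpace ℝ E]
    [NormedAddCommGroup F] [NormedSpace ℝ F]
    (f : E → F) (v : ℝ × (Fin d → ℝ) → E) (p : ℝ) (z : Fin d → ℝ)
    (hf : DifferentiableAt ℝ f (v (p, z))) (hv : DifferentiableAt ℝ v (p, z)) :
    HasDerivAt (fun s => f (v (s, z)))
      (fderiv ℝ f (v (p, z)) (fderiv ℝ v (p, z) (1, 0))) p := by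
  have h1 : HasDerivAt (fun s : ℝ => (s, z)) ((1 : ℝ), (0 : Fin d → ℝ)) p :=
    (hasDerivAt_id p).prodMk (hasDerivAt_const p z)
  have h2 := hf.hasFDerivAt.comp (p, z) hv.hasFDerivAt
  simpa [Function.comp_def] using h2.comp_hasDerivAt p h1

lemma hasFDerivAt_space {d : ℕ} {E F : Type*} [NormedAddCommGroup E] [NormedSpace ℝ E]
    [NormedAddCommGroup F] [NormedSpace ℝ F]
    (f : E → F) (v : ℝ × (Fin d → ℝ) → E) (p : ℝ) (z : Fin d → ℝ)
    (hf : DifferentiableAt ℝ f (v (p, z))) (hv : DifferentiableAt ℝ v (p, z)) :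
    HasFDerivAt (fun y => f (v (p, y)))
      (((fderiv ℝ f (v (p, z))).comp (fderiv ℝ v (p, z))).comp
        ((0 : (Fin d → ℝ) →L[ℝ] ℝ).prod (ContinuousLinearMap.id ℝ (Fin d → ℝ)))) z := by
  have h1 : HasFDerivAt (fun y : Fin d → ℝ => ((p : ℝ), y))
      ((0 : (Fin d → ℝ) →L[ℝ] ℝ).prod (ContinuousLinearMap.id ℝ (Fin d → ℝ))) z :=
    (hasFDerivAt_const p z).prodMk (hasFDerivAt_id z)
  exact (hf.hasFDerivAt.comp (p, z) hv.hasFDerivAt).comp z h1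

lemma fderiv_space_apply {d : ℕ} {E F : Type*} [NormedAddCommGroup E] [NormedSpace ℝ E]
    [NormedAddCommGroup F] [NormedSpace ℝ F]
    (f : E → F) (v : ℝ × (Fin d → ℝ) → E) (p : ℝ) (z : Fin d → ℝ)
    (hf : DifferentiableAt ℝ f (v (p, z))) (hv : DifferentiableAt ℝ v (p, z))
    (w : Fin d → ℝ) :
    fderiv ℝ (fun y => f (v (p, y))) z w
      = fderiv ℝ f (v (p, z)) (fderiv ℝ v (p, z) (0, w)) := by
  rw [(hasFDerivAt_space f v p z hf hv).fderiv]
  simp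

lemma isUnit_of_bijective {E : Type*} [NormedAddCommGroup E] [NormedSpace ℝ E]
    [FiniteDimensional ℝ E] (T : E →L[ℝ] E) (h : Function.Bijective T) : IsUnit T := by
  let e : E ≃ₗ[ℝ] E := LinearEquiv.ofBijective (T : E →ₗ[ℝ] E) h
  let e' : E ≃L[ℝ] E := e.toContinuousLinearEquiv
  have hTe : ∀ y, T y = e' y := fun y => rfl
  refine isUnit_iff_exists.mpr ⟨(e'.symm : E →L[ℝ] E), ?_, ?_⟩
  · ext x
    show T (e'.symm x) = x
    rw [hTe]
    exact e'.apply_symm_apply x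
  · ext x
    show e'.symm (T x) = x
    rw [hTe]
    exact e'.symm_apply_apply x

/-- **Relative entropy identity for hyperbolic systems (smooth solutions).**
Let `u`, `ū` be C¹ solutions of `∂_t A(u) + Σ_α ∂_{x_α} F_α(u) = 0` on an open set
`Ω ⊆ ℝ⁺ × ℝ^d`, under (H1) and (H2), each satisfying the entropy identity
`∂_t η + Σ_α ∂_{x_α} q_α = 0`.  Then pointwise on `Ω`:
`∂_t η(u|ū) + Σ_α ∂_{x_α} q_α(u|ū) = − Σ_α ∂_{x_α}(G(ū)) · F_α(u|ū)`, where
`η(u|ū) = η(u) − η(ū) − G(ū)·(A(u) − A(ū))`,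
`q_α(u|ū) = q_α(u) − q_α(ū) − G(ū)·(F_α(u) − F_α(ū))`, and
`F_α(u|ū) = F_α(u) − F_α(ū) − ∇F_α(ū) ∇A(ū)⁻¹ (A(u) − A(ū))`. -/
theorem relative_entropy_identity_hyperbolic
    (n d : ℕ)
    (A : EuclideanSpace ℝ (Fin n) → EuclideanSpace ℝ (Fin n))
    (F : Fin d → EuclideanSpace ℝ (Fin n) → EuclideanSpace ℝ (Fin n))
    (η : EuclideanSpace ℝ (Fin n) → ℝ)
    (q : Fin d → EuclideanSpace ℝ (Fin n) → ℝ)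
    (G : EuclideanSpace ℝ (Fin n) → EuclideanSpace ℝ (Fin n))
    -- smoothness of the constitutive functions
    (hAreg : ContDiff ℝ 2 A) (hFreg : ∀ α, ContDiff ℝ (⊤ : ℕ∞) (F α))
    (hηreg : ContDiff ℝ (⊤ : ℕ∞) η) (hqreg : ∀ α, ContDiff ℝ (⊤ : ℕ∞) (q α))
    (hGreg : ContDiff ℝ (⊤ : ℕ∞) G)
    -- (H1)
    (hH1 : Function.Bijective A)
    (hH1' : ∀ w, Function.Bijective (fderiv ℝ A w))
    -- (H2)
    (hH2η : ∀ w ξ, fderiv ℝ η w ξ = ⟪G w, fderiv ℝ A w ξ⟫)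
    (hH2q : ∀ α w ξ, fderiv ℝ (q α) w ξ = ⟪G w, fderiv ℝ (F α) w ξ⟫)
    -- the open domain, contained in ℝ⁺ × ℝ^d
    (Ω : Set (ℝ × (Fin d → ℝ))) (hΩ : IsOpen Ω)
    (hΩpos : ∀ pz ∈ Ω, 0 < pz.1)
    -- the two C¹ solutions
    (u ubar : ℝ → (Fin d → ℝ) → EuclideanSpace ℝ (Fin n))
    (hureg : ContDiffOn ℝ 1 (fun pz : ℝ × (Fin d → ℝ) => u pz.1 pz.2) Ω)
    (hubarreg : ContDiffOn ℝ 1 (fun pz : ℝ × (Fin d → ℝ) => ubar pz.1 pz.2) Ω)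
    (hupde : ∀ pz ∈ Ω,
      deriv (fun s => A (u s pz.2)) pz.1
        + ∑ α, fderiv ℝ (fun y => F α (u pz.1 y)) pz.2 (Pi.single α 1) = 0)
    (hubarpde : ∀ pz ∈ Ω,
      deriv (fun s => A (ubar s pz.2)) pz.1
        + ∑ α, fderiv ℝ (fun y => F α (ubar pz.1 y)) pz.2 (Pi.single α 1) = 0)
    -- entropy identities for both solutions
    (huent : ∀ pz ∈ Ω,
      deriv (fun s => η (u s pz.2)) pz.1
        + ∑ α, fderiv ℝ (fun y => q α (u pz.1 y)) pz.2 (Pi.single α 1) = 0)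
    (hubarent : ∀ pz ∈ Ω,
      deriv (fun s => η (ubar s pz.2)) pz.1
        + ∑ α, fderiv ℝ (fun y => q α (ubar pz.1 y)) pz.2 (Pi.single α 1) = 0) :
    ∀ pz ∈ Ω,
      deriv (fun s => η (u s pz.2) - η (ubar s pz.2)
          - ⟪G (ubar s pz.2), A (u s pz.2) - A (ubar s pz.2)⟫) pz.1
        + ∑ α, fderiv ℝ (fun y => q α (u pz.1 y) - q α (ubar pz.1 y)
            - ⟪G (ubar pz.1 y), F α (u pz.1 y) - F α (ubar pz.1 y)⟫) pz.2 (Pi.single α 1)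
      = - ∑ α, ⟪fderiv ℝ (fun y => G (ubar pz.1 y)) pz.2 (Pi.single α 1),
            F α (u pz.1 pz.2) - F α (ubar pz.1 pz.2)
              - (fderiv ℝ (F α) (ubar pz.1 pz.2))
                  (Ring.inverse (fderiv ℝ A (ubar pz.1 pz.2))
                    (A (u pz.1 pz.2) - A (ubar pz.1 pz.2)))⟫ := by
  intro pz hpz
  -- differentiability of the two solutions at pz
  have hU : DifferentiableAt ℝ (fun w : ℝ × (Fin d → ℝ) => u w.1 w.2) pz :=
    (hureg.contDiffAt (hΩ.mem_nhds hpz)).differentiableAt one_ne_zero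
  have hUb : DifferentiableAt ℝ (fun w : ℝ × (Fin d → ℝ) => ubar w.1 w.2) pz :=
    (hubarreg.contDiffAt (hΩ.mem_nhds hpz)).differentiableAt one_ne_zero
  -- regularity shorthands
  have hF2 : ∀ α, ContDiff ℝ 2 (F α) :=
    fun α => (hFreg α).of_le (WithTop.coe_le_coe.mpr le_top)
  have hη2 : ContDiff ℝ 2 η := hηreg.of_le (WithTop.coe_le_coe.mpr le_top)
  have hq2 : ∀ α, ContDiff ℝ 2 (q α) :=
    fun α => (hqreg α).of_le (WithTop.coe_le_coe.mpr le_top)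
  have hG1 : ContDiff ℝ 1 G := hGreg.of_le (WithTop.coe_le_coe.mpr le_top)
  have hAd : ∀ x, DifferentiableAt ℝ A x :=
    fun x => (hAreg.differentiable two_ne_zero).differentiableAt
  have hFd : ∀ α x, DifferentiableAt ℝ (F α) x :=
    fun α x => ((hF2 α).differentiable two_ne_zero).differentiableAt
  have hηd : ∀ x, DifferentiableAt ℝ η x :=
    fun x => (hη2.differentiable two_ne_zero).differentiableAt
  have hqd : ∀ α x, DifferentiableAt ℝ (q α) x :=
    fun α x => ((hq2 α).differentiable two_ne_zero).differentiableAt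
  have hGd : ∀ x, DifferentiableAt ℝ G x :=
    fun x => (hG1.differentiable one_ne_zero).differentiableAt
  -- time derivatives
  have hηu_t : HasDerivAt (fun s => η (u s pz.2))
      (fderiv ℝ η (u pz.1 pz.2)
        (fderiv ℝ (fun w : ℝ × (Fin d → ℝ) => u w.1 w.2) pz (1, 0))) pz.1 :=
    hasDerivAt_time η (fun w => u w.1 w.2) pz.1 pz.2 (hηd _) hU
  have hηb_t : HasDerivAt (fun s => η (ubar s pz.2))
      (fderiv ℝ η (ubar pz.1 pz.2)
        (fderiv ℝ (fun w : ℝ × (Fin d → ℝ) => ubar w.1 w.2) pz (1, 0))) pz.1 :=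
    hasDerivAt_time η (fun w => ubar w.1 w.2) pz.1 pz.2 (hηd _) hUb
  have hAu_t : HasDerivAt (fun s => A (u s pz.2))
      (fderiv ℝ A (u pz.1 pz.2)
        (fderiv ℝ (fun w : ℝ × (Fin d → ℝ) => u w.1 w.2) pz (1, 0))) pz.1 :=
    hasDerivAt_time A (fun w => u w.1 w.2) pz.1 pz.2 (hAd _) hU
  have hAb_t : HasDerivAt (fun s => A (ubar s pz.2))
      (fderiv ℝ A (ubar pz.1 pz.2)
        (fderiv ℝ (fun w : ℝ × (Fin d → ℝ) => ubar w.1 w.2) pz (1, 0))) pz.1 :=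
    hasDerivAt_time A (fun w => ubar w.1 w.2) pz.1 pz.2 (hAd _) hUb
  have hGb_t : HasDerivAt (fun s => G (ubar s pz.2))
      (fderiv ℝ G (ubar pz.1 pz.2)
        (fderiv ℝ (fun w : ℝ × (Fin d → ℝ) => ubar w.1 w.2) pz (1, 0))) pz.1 :=
    hasDerivAt_time G (fun w => ubar w.1 w.2) pz.1 pz.2 (hGd _) hUb
  -- space derivative values for single functions
  have hFu_s : ∀ α β, fderiv ℝ (fun y => F α (u pz.1 y)) pz.2 (Pi.single β 1)
      = fderiv ℝ (F α) (u pz.1 pz.2)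
          (fderiv ℝ (fun w : ℝ × (Fin d → ℝ) => u w.1 w.2) pz (0, Pi.single β 1)) :=
    fun α β => fderiv_space_apply (F α) (fun w => u w.1 w.2) pz.1 pz.2 (hFd α _) hU _
  have hFb_s : ∀ α β, fderiv ℝ (fun y => F α (ubar pz.1 y)) pz.2 (Pi.single β 1)
      = fderiv ℝ (F α) (ubar pz.1 pz.2)
          (fderiv ℝ (fun w : ℝ × (Fin d → ℝ) => ubar w.1 w.2) pz (0, Pi.single β 1)) :=
    fun α β => fderiv_space_apply (F α) (fun w => ubar w.1 w.2) pz.1 pz.2 (hFd α _) hUb _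
  have hGs : ∀ β, fderiv ℝ (fun y => G (ubar pz.1 y)) pz.2 (Pi.single β 1)
      = fderiv ℝ G (ubar pz.1 pz.2)
          (fderiv ℝ (fun w : ℝ × (Fin d → ℝ) => ubar w.1 w.2) pz (0, Pi.single β 1)) :=
    fun β => fderiv_space_apply G (fun w => ubar w.1 w.2) pz.1 pz.2 (hGd _) hUb _
  -- the PDEs in pointwise form
  have pdeU : fderiv ℝ A (u pz.1 pz.2)
        (fderiv ℝ (fun w : ℝ × (Fin d → ℝ) => u w.1 w.2) pz (1, 0))
      + ∑ α, fderiv ℝ (F α) (u pz.1 pz.2)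
          (fderiv ℝ (fun w : ℝ × (Fin d → ℝ) => u w.1 w.2) pz (0, Pi.single α 1)) = 0 := by
    have h := hupde pz hpz
    rw [hAu_t.deriv] at h
    simp only [hFu_s] at h
    exact h
  have pdeB : fderiv ℝ A (ubar pz.1 pz.2)
        (fderiv ℝ (fun w : ℝ × (Fin d → ℝ) => ubar w.1 w.2) pz (1, 0))
      + ∑ α, fderiv ℝ (F α) (ubar pz.1 pz.2)
          (fderiv ℝ (fun w : ℝ × (Fin d → ℝ) => ubar w.1 w.2) pz (0, Pi.single α 1)) = 0 := by
    have h := hubarpde pz hpz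
    rw [hAb_t.deriv] at h
    simp only [hFb_s] at h
    exact h
  -- scalar consequences of the PDEs
  have step1 : ⟪G (u pz.1 pz.2), fderiv ℝ A (u pz.1 pz.2)
        (fderiv ℝ (fun w : ℝ × (Fin d → ℝ) => u w.1 w.2) pz (1, 0))⟫
      = - ∑ α, ⟪G (u pz.1 pz.2), fderiv ℝ (F α) (u pz.1 pz.2)
          (fderiv ℝ (fun w : ℝ × (Fin d → ℝ) => u w.1 w.2) pz (0, Pi.single α 1))⟫ := by
    rw [eq_neg_of_add_eq_zero_left pdeU, inner_neg_right, inner_sum]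
  have step2 : ⟪G (ubar pz.1 pz.2), fderiv ℝ A (u pz.1 pz.2)
        (fderiv ℝ (fun w : ℝ × (Fin d → ℝ) => u w.1 w.2) pz (1, 0))⟫
      = - ∑ α, ⟪G (ubar pz.1 pz.2), fderiv ℝ (F α) (u pz.1 pz.2)
          (fderiv ℝ (fun w : ℝ × (Fin d → ℝ) => u w.1 w.2) pz (0, Pi.single α 1))⟫ := by
    rw [eq_neg_of_add_eq_zero_left pdeU, inner_neg_right, inner_sum]
  -- the inverse identity
  have hr : fderiv ℝ A (ubar pz.1 pz.2)
        (Ring.inverse (fderiv ℝ A (ubar pz.1 pz.2)) (A (u pz.1 pz.2) - A (ubar pz.1 pz.2)))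
      = A (u pz.1 pz.2) - A (ubar pz.1 pz.2) := by
    have h1 := Ring.mul_inverse_cancel _ (isUnit_of_bijective _ (hH1' (ubar pz.1 pz.2)))
    have h2 := congrFun (congrArg
      (fun (L : EuclideanSpace ℝ (Fin n) →L[ℝ] EuclideanSpace ℝ (Fin n)) =>
        (L : EuclideanSpace ℝ (Fin n) → EuclideanSpace ℝ (Fin n))) h1)
      (A (u pz.1 pz.2) - A (ubar pz.1 pz.2))
    simpa using h2
  -- symmetry relations from (H2)
  have symA : ∀ ζ ξ, ⟪fderiv ℝ G (ubar pz.1 pz.2) ζ, fderiv ℝ A (ubar pz.1 pz.2) ξ⟫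
      = ⟪fderiv ℝ G (ubar pz.1 pz.2) ξ, fderiv ℝ A (ubar pz.1 pz.2) ζ⟫ :=
    companion_symm η A G hη2 hAreg hG1 hH2η (ubar pz.1 pz.2)
  have symF : ∀ α ζ ξ, ⟪fderiv ℝ G (ubar pz.1 pz.2) ζ, fderiv ℝ (F α) (ubar pz.1 pz.2) ξ⟫
      = ⟪fderiv ℝ G (ubar pz.1 pz.2) ξ, fderiv ℝ (F α) (ubar pz.1 pz.2) ζ⟫ :=
    fun α => companion_symm (q α) (F α) G (hq2 α) (hF2 α) hG1 (hH2q α) (ubar pz.1 pz.2)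
  -- key step
  have hkey : ⟪fderiv ℝ G (ubar pz.1 pz.2)
        (fderiv ℝ (fun w : ℝ × (Fin d → ℝ) => ubar w.1 w.2) pz (1, 0)),
        A (u pz.1 pz.2) - A (ubar pz.1 pz.2)⟫
      = - ∑ α, ⟪fderiv ℝ G (ubar pz.1 pz.2)
            (fderiv ℝ (fun w : ℝ × (Fin d → ℝ) => ubar w.1 w.2) pz (0, Pi.single α 1)),
          fderiv ℝ (F α) (ubar pz.1 pz.2)
            (Ring.inverse (fderiv ℝ A (ubar pz.1 pz.2))
              (A (u pz.1 pz.2) - A (ubar pz.1 pz.2)))⟫ := by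
    have hBT : fderiv ℝ A (ubar pz.1 pz.2)
        (fderiv ℝ (fun w : ℝ × (Fin d → ℝ) => ubar w.1 w.2) pz (1, 0))
        = - ∑ α, fderiv ℝ (F α) (ubar pz.1 pz.2)
            (fderiv ℝ (fun w : ℝ × (Fin d → ℝ) => ubar w.1 w.2) pz (0, Pi.single α 1)) :=
      eq_neg_of_add_eq_zero_left pdeB
    calc ⟪fderiv ℝ G (ubar pz.1 pz.2)
            (fderiv ℝ (fun w : ℝ × (Fin d → ℝ) => ubar w.1 w.2) pz (1, 0)),
          A (u pz.1 pz.2) - A (ubar pz.1 pz.2)⟫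
        = ⟪fderiv ℝ G (ubar pz.1 pz.2)
            (fderiv ℝ (fun w : ℝ × (Fin d → ℝ) => ubar w.1 w.2) pz (1, 0)),
          fderiv ℝ A (ubar pz.1 pz.2)
            (Ring.inverse (fderiv ℝ A (ubar pz.1 pz.2))
              (A (u pz.1 pz.2) - A (ubar pz.1 pz.2)))⟫ := by rw [hr]
      _ = ⟪fderiv ℝ G (ubar pz.1 pz.2)
            (Ring.inverse (fderiv ℝ A (ubar pz.1 pz.2))
              (A (u pz.1 pz.2) - A (ubar pz.1 pz.2))),
          fderiv ℝ A (ubar pz.1 pz.2)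
            (fderiv ℝ (fun w : ℝ × (Fin d → ℝ) => ubar w.1 w.2) pz (1, 0))⟫ := symA _ _
      _ = - ∑ α, ⟪fderiv ℝ G (ubar pz.1 pz.2)
            (Ring.inverse (fderiv ℝ A (ubar pz.1 pz.2))
              (A (u pz.1 pz.2) - A (ubar pz.1 pz.2))),
          fderiv ℝ (F α) (ubar pz.1 pz.2)
            (fderiv ℝ (fun w : ℝ × (Fin d → ℝ) => ubar w.1 w.2) pz (0, Pi.single α 1))⟫ := by
          rw [hBT, inner_neg_right, inner_sum]
      _ = - ∑ α, ⟪fderiv ℝ G (ubar pz.1 pz.2)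
            (fderiv ℝ (fun w : ℝ × (Fin d → ℝ) => ubar w.1 w.2) pz (0, Pi.single α 1)),
          fderiv ℝ (F α) (ubar pz.1 pz.2)
            (Ring.inverse (fderiv ℝ A (ubar pz.1 pz.2))
              (A (u pz.1 pz.2) - A (ubar pz.1 pz.2)))⟫ := by
          congr 1
          exact Finset.sum_congr rfl fun α _ => symF α _ _
  -- the time derivative of the relative entropy
  have hD_t : deriv (fun s => η (u s pz.2) - η (ubar s pz.2)
      - ⟪G (ubar s pz.2), A (u s pz.2) - A (ubar s pz.2)⟫) pz.1
      = fderiv ℝ η (u pz.1 pz.2)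
          (fderiv ℝ (fun w : ℝ × (Fin d → ℝ) => u w.1 w.2) pz (1, 0))
        - fderiv ℝ η (ubar pz.1 pz.2)
          (fderiv ℝ (fun w : ℝ × (Fin d → ℝ) => ubar w.1 w.2) pz (1, 0))
        - (⟪G (ubar pz.1 pz.2),
            fderiv ℝ A (u pz.1 pz.2)
              (fderiv ℝ (fun w : ℝ × (Fin d → ℝ) => u w.1 w.2) pz (1, 0))
            - fderiv ℝ A (ubar pz.1 pz.2)
              (fderiv ℝ (fun w : ℝ × (Fin d → ℝ) => ubar w.1 w.2) pz (1, 0))⟫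
          + ⟪fderiv ℝ G (ubar pz.1 pz.2)
              (fderiv ℝ (fun w : ℝ × (Fin d → ℝ) => ubar w.1 w.2) pz (1, 0)),
            A (u pz.1 pz.2) - A (ubar pz.1 pz.2)⟫) :=
    ((hηu_t.sub hηb_t).sub (hGb_t.inner ℝ (hAu_t.sub hAb_t))).deriv
  -- the space derivatives of the relative fluxes
  have hD_s : ∀ α, fderiv ℝ (fun y => q α (u pz.1 y) - q α (ubar pz.1 y)
      - ⟪G (ubar pz.1 y), F α (u pz.1 y) - F α (ubar pz.1 y)⟫) pz.2 (Pi.single α 1)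
      = fderiv ℝ (q α) (u pz.1 pz.2)
          (fderiv ℝ (fun w : ℝ × (Fin d → ℝ) => u w.1 w.2) pz (0, Pi.single α 1))
        - fderiv ℝ (q α) (ubar pz.1 pz.2)
          (fderiv ℝ (fun w : ℝ × (Fin d → ℝ) => ubar w.1 w.2) pz (0, Pi.single α 1))
        - (⟪G (ubar pz.1 pz.2),
            fderiv ℝ (F α) (u pz.1 pz.2)
              (fderiv ℝ (fun w : ℝ × (Fin d → ℝ) => u w.1 w.2) pz (0, Pi.single α 1))
            - fderiv ℝ (F α) (ubar pz.1 pz.2)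
              (fderiv ℝ (fun w : ℝ × (Fin d → ℝ) => ubar w.1 w.2) pz (0, Pi.single α 1))⟫
          + ⟪fderiv ℝ G (ubar pz.1 pz.2)
              (fderiv ℝ (fun w : ℝ × (Fin d → ℝ) => ubar w.1 w.2) pz (0, Pi.single α 1)),
            F α (u pz.1 pz.2) - F α (ubar pz.1 pz.2)⟫) := by
    intro α
    have h1 := hasFDerivAt_space (q α) (fun w => u w.1 w.2) pz.1 pz.2 (hqd α _) hU
    have h2 := hasFDerivAt_space (q α) (fun w => ubar w.1 w.2) pz.1 pz.2 (hqd α _) hUb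
    have h3 := hasFDerivAt_space (F α) (fun w => u w.1 w.2) pz.1 pz.2 (hFd α _) hU
    have h4 := hasFDerivAt_space (F α) (fun w => ubar w.1 w.2) pz.1 pz.2 (hFd α _) hUb
    have h5 := hasFDerivAt_space G (fun w => ubar w.1 w.2) pz.1 pz.2 (hGd _) hUb
    have hc : HasFDerivAt (fun y => q α (u pz.1 y) - q α (ubar pz.1 y)
        - ⟪G (ubar pz.1 y), F α (u pz.1 y) - F α (ubar pz.1 y)⟫) _ pz.2 :=
      (h1.sub h2).sub (h5.inner ℝ (h3.sub h4))
    rw [hc.fderiv]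
    simp [fderivInnerCLM_apply, ContinuousLinearMap.comp_apply,
      ContinuousLinearMap.prod_apply, ContinuousLinearMap.sub_apply]
  -- put everything together
  rw [hD_t]
  simp only [hD_s, hGs, hH2η, hH2q]
  simp only [inner_sub_right, Finset.sum_sub_distrib, Finset.sum_add_distrib]
  simp only [inner_sub_right] at hkey
  linarith [step1, step2, hkey]
end
end

section
/- Relative entropy identity comparing a viscous and an inviscid solution: Let u be a smooth solution of ∂_t A(u) + Σ_α ∂_{x_α} F_α(u) = ε Σ_{α,β} ∂_{x_α}(B_{αβ}(u) ∂_{x_β} u) and ū a smooth solution of ∂_t A(ū) + Σ_α ∂_{x_α} F_α(ū) = 0, under hypotheses (H1) and (H2), with u satisfying the entropy identity for the viscous system and ū the entropy conservation identity. Then the following identity holds pointwise: ∂_t η(u|ū) + Σ_α ∂_{x_α}[q_α(u|ū) − ε (G(u) − G(ū)) · Σ_β B_{αβ}(u) ∂_{x_β} u] + ε Σ_{α,β} ∇G(u) ∂_{x_α} u · B_{αβ}(u) ∂_{x_β} u = − Σ_α ∂_{x_α}(G(ū)) · F_α(u|ū) + ε Σ_{α,β} ∂_{x_α}(G(ū))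 · B_{αβ}(u) ∂_{x_β} u. -/
open scoped RealInnerProductSpace
open MeasureTheory

noncomputable section

lemma RE.fderiv_clm_apply_const
    {E F G : Type*} [NormedAddCommGroup E] [NormedSpace ℝ E]
    [NormedAddCommGroup F] [NormedSpace ℝ F] [NormedAddCommGroup G] [NormedSpace ℝ G]
    {c : E → F →L[ℝ] G} {x : E} (hc : DifferentiableAt ℝ c x) (ξ : F) (ζ : E) :
    fderiv ℝ (fun v => c v ξ) x ζ = fderiv ℝ c x ζ ξ := by
  have h : (fun v => c v ξ) = (ContinuousLinearMap.apply ℝ G ξ) ∘ c := rfl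
  rw [h, fderiv_comp x ((ContinuousLinearMap.apply ℝ G ξ).differentiableAt) hc]
  simp

lemma RE.symm_pairing
    {E : Type*} [NormedAddCommGroup E] [InnerProductSpace ℝ E]
    {A : E → E} {η : E → ℝ} {G : E → E}
    (hA : ContDiff ℝ 2 A) (hη : ContDiff ℝ 2 η) (hG : ContDiff ℝ 1 G)
    (h : ∀ w ξ, fderiv ℝ η w ξ = ⟪G w, fderiv ℝ A w ξ⟫)
    (w ξ ζ : E) :
    ⟪fderiv ℝ G w ζ, fderiv ℝ A w ξ⟫ = ⟪fderiv ℝ G w ξ, fderiv ℝ A w ζ⟫ := by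
  have hGd : Differentiable ℝ G := hG.differentiable one_ne_zero
  have hA' : Differentiable ℝ (fderiv ℝ A) :=
    (hA.fderiv_right (m := 1) (by norm_num)).differentiable one_ne_zero
  have hη' : Differentiable ℝ (fderiv ℝ η) :=
    (hη.fderiv_right (m := 1) (by norm_num)).differentiable one_ne_zero
  have key : ∀ ξ ζ : E, fderiv ℝ (fderiv ℝ η) w ζ ξ
      = ⟪fderiv ℝ G w ζ, fderiv ℝ A w ξ⟫ + ⟪G w, fderiv ℝ (fderiv ℝ A) w ζ ξ⟫ := by
    intro ξ ζ
    have e1 : (fun v => fderiv ℝ η v ξ) = fun v => ⟪G v, fderiv ℝ A v ξ⟫ :=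
      funext fun v => h v ξ
    have l1 : fderiv ℝ (fun v => fderiv ℝ η v ξ) w ζ = fderiv ℝ (fderiv ℝ η) w ζ ξ :=
      RE.fderiv_clm_apply_const (hη' w) ξ ζ
    have l2 : fderiv ℝ (fun v => fderiv ℝ A v ξ) w ζ = fderiv ℝ (fderiv ℝ A) w ζ ξ :=
      RE.fderiv_clm_apply_const (hA' w) ξ ζ
    have r1 : fderiv ℝ (fun v => ⟪G v, fderiv ℝ A v ξ⟫) w ζ
        = ⟪G w, fderiv ℝ (fun v => fderiv ℝ A v ξ) w ζ⟫
          + ⟪fderiv ℝ G w ζ, fderiv ℝ A w ξ⟫ :=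
      fderiv_inner_apply (𝕜 := ℝ) (hGd w) ((hA' w).clm_apply (differentiableAt_const ξ)) ζ
    rw [← l1, e1, r1, l2]
    ring
  have sη : IsSymmSndFDerivAt ℝ η w := hη.contDiffAt.isSymmSndFDerivAt (by simp)
  have sA : IsSymmSndFDerivAt ℝ A w := hA.contDiffAt.isSymmSndFDerivAt (by simp)
  have k1 := key ξ ζ
  have k2 := key ζ ξ
  rw [sη ζ ξ, sA ζ ξ] at k1
  linarith [k1, k2]

/-- **Relative entropy identity comparing a viscous and an inviscid solution.**
Let `u` be a smooth solution of the viscous system and `ū` a smooth solution of the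
inviscid system, under (H1), (H2), each satisfying the corresponding entropy identity.
Then pointwise:
`∂_t η(u|ū) + Σ_α ∂_{x_α}[q_α(u|ū) − ε (G(u) − G(ū)) · Σ_β B_{αβ}(u) ∂_{x_β} u]
  + ε Σ_{α,β} ∇G(u) ∂_{x_α} u · B_{αβ}(u) ∂_{x_β} u
  = − Σ_α ∂_{x_α}(G(ū)) · F_α(u|ū) + ε Σ_{α,β} ∂_{x_α}(G(ū)) · B_{αβ}(u) ∂_{x_β} u`. -/
theorem relative_entropy_identity_viscous_vs_inviscid
    (n d : ℕ)
    (A : EuclideanSpace ℝ (Fin n) → EuclideanSpace ℝ (Fin n))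
    (F : Fin d → EuclideanSpace ℝ (Fin n) → EuclideanSpace ℝ (Fin n))
    (B : Fin d → Fin d → EuclideanSpace ℝ (Fin n) →
      (EuclideanSpace ℝ (Fin n) →L[ℝ] EuclideanSpace ℝ (Fin n)))
    (η : EuclideanSpace ℝ (Fin n) → ℝ)
    (q : Fin d → EuclideanSpace ℝ (Fin n) → ℝ)
    (G : EuclideanSpace ℝ (Fin n) → EuclideanSpace ℝ (Fin n))
    -- smoothness of the constitutive functions
    (hAreg : ContDiff ℝ 2 A) (hFreg : ∀ α, ContDiff ℝ (⊤ : ℕ∞) (F α))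
    (hBreg : ∀ α β, ContDiff ℝ (⊤ : ℕ∞) (B α β))
    (hηreg : ContDiff ℝ (⊤ : ℕ∞) η) (hqreg : ∀ α, ContDiff ℝ (⊤ : ℕ∞) (q α))
    (hGreg : ContDiff ℝ (⊤ : ℕ∞) G)
    -- (H1)
    (hH1 : Function.Bijective A)
    (hH1' : ∀ w, Function.Bijective (fderiv ℝ A w))
    -- (H2)
    (hH2η : ∀ w ξ, fderiv ℝ η w ξ = ⟪G w, fderiv ℝ A w ξ⟫)
    (hH2q : ∀ α w ξ, fderiv ℝ (q α) w ξ = ⟪G w, fderiv ℝ (F α) w ξ⟫)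
    (ε : ℝ) (hε : 0 < ε)
    -- smooth solution of the viscous system
    (u : ℝ → (Fin d → ℝ) → EuclideanSpace ℝ (Fin n))
    (hureg : ContDiff ℝ (⊤ : ℕ∞) (fun pz : ℝ × (Fin d → ℝ) => u pz.1 pz.2))
    (hupde : ∀ t x,
      deriv (fun s => A (u s x)) t
        + ∑ α, fderiv ℝ (fun y => F α (u t y)) x (Pi.single α 1)
      = ε • ∑ α, fderiv ℝ
          (fun y => ∑ β, B α β (u t y) (fderiv ℝ (u t) y (Pi.single β 1)))
          x (Pi.single α 1))
    -- entropy identity for the viscous solution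
    (huent : ∀ t x,
      deriv (fun s => η (u s x)) t
        + ∑ α, fderiv ℝ (fun y => q α (u t y)) x (Pi.single α 1)
      = ε * (∑ α, fderiv ℝ
              (fun y => ⟪G (u t y),
                  ∑ β, B α β (u t y) (fderiv ℝ (u t) y (Pi.single β 1))⟫)
              x (Pi.single α 1))
        - ε * ∑ α, ∑ β,
            ⟪fderiv ℝ G (u t x) (fderiv ℝ (u t) x (Pi.single α 1)),
              B α β (u t x) (fderiv ℝ (u t) x (Pi.single β 1))⟫)
    -- smooth solution of the inviscid system
    (ubar : ℝ → (Fin d → ℝ) → EuclideanSpace ℝ (Fin n))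
    (hubarreg : ContDiff ℝ (⊤ : ℕ∞) (fun pz : ℝ × (Fin d → ℝ) => ubar pz.1 pz.2))
    (hubarpde : ∀ t x,
      deriv (fun s => A (ubar s x)) t
        + ∑ α, fderiv ℝ (fun y => F α (ubar t y)) x (Pi.single α 1) = 0)
    -- entropy conservation identity for the inviscid solution
    (hubarent : ∀ t x,
      deriv (fun s => η (ubar s x)) t
        + ∑ α, fderiv ℝ (fun y => q α (ubar t y)) x (Pi.single α 1) = 0) :
    ∀ t x,
      deriv (fun s => η (u s x) - η (ubar s x)
          - ⟪G (ubar s x), A (u s x) - A (ubar s x)⟫) t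
        + ∑ α, fderiv ℝ (fun y =>
            (q α (u t y) - q α (ubar t y)
              - ⟪G (ubar t y), F α (u t y) - F α (ubar t y)⟫)
            - ε * ⟪G (u t y) - G (ubar t y),
                ∑ β, B α β (u t y) (fderiv ℝ (u t) y (Pi.single β 1))⟫)
            x (Pi.single α 1)
        + ε * ∑ α, ∑ β,
            ⟪fderiv ℝ G (u t x) (fderiv ℝ (u t) x (Pi.single α 1)),
              B α β (u t x) (fderiv ℝ (u t) x (Pi.single β 1))⟫
      = - (∑ α, ⟪fderiv ℝ (fun y => G (ubar t y)) x (Pi.single α 1),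
            F α (u t x) - F α (ubar t x)
              - (fderiv ℝ (F α) (ubar t x))
                  (Ring.inverse (fderiv ℝ A (ubar t x))
                    (A (u t x) - A (ubar t x)))⟫)
        + ε * ∑ α, ∑ β,
            ⟪fderiv ℝ (fun y => G (ubar t y)) x (Pi.single α 1),
              B α β (u t x) (fderiv ℝ (u t) x (Pi.single β 1))⟫ := by
  have h1le : (1 : WithTop ℕ∞) ≤ ((⊤ : ℕ∞) : WithTop ℕ∞) := WithTop.coe_le_coe.mpr le_top
  have h2le : (2 : WithTop ℕ∞) ≤ ((⊤ : ℕ∞) : WithTop ℕ∞) := WithTop.coe_le_coe.mpr le_top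
  have hGd : Differentiable ℝ G := hGreg.differentiable (by simp)
  have hηd : Differentiable ℝ η := hηreg.differentiable (by simp)
  have hAd : Differentiable ℝ A := hAreg.differentiable two_ne_zero
  have hFd : ∀ α, Differentiable ℝ (F α) := fun α => (hFreg α).differentiable (by simp)
  have hqd : ∀ α, Differentiable ℝ (q α) := fun α => (hqreg α).differentiable (by simp)
  have hBd : ∀ α β, Differentiable ℝ (B α β) := fun α β => (hBreg α β).differentiable (by simp)
  have symA := RE.symm_pairing hAreg (hηreg.of_le h2le) (hGreg.of_le h1le) hH2η
  have symF : ∀ α, ∀ w ξ ζ : EuclideanSpace ℝ (Fin n),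
      ⟪fderiv ℝ G w ζ, fderiv ℝ (F α) w ξ⟫ = ⟪fderiv ℝ G w ξ, fderiv ℝ (F α) w ζ⟫ :=
    fun α => RE.symm_pairing ((hFreg α).of_le h2le) ((hqreg α).of_le h2le)
      (hGreg.of_le h1le) (hH2q α)
  intro t x
  -- regularity of partial maps
  have hut : ContDiff ℝ ((⊤ : ℕ∞) : WithTop ℕ∞) (u t) :=
    hureg.comp (contDiff_const.prodMk contDiff_id)
  have hubt : ContDiff ℝ ((⊤ : ℕ∞) : WithTop ℕ∞) (ubar t) :=
    hubarreg.comp (contDiff_const.prodMk contDiff_id)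
  have hus : Differentiable ℝ (fun s => u s x) :=
    (hureg.comp (contDiff_id.prodMk contDiff_const)).differentiable (by simp)
  have hubs : Differentiable ℝ (fun s => ubar s x) :=
    (hubarreg.comp (contDiff_id.prodMk contDiff_const)).differentiable (by simp)
  have hud : Differentiable ℝ (u t) := hut.differentiable (by simp)
  have hubd : Differentiable ℝ (ubar t) := hubt.differentiable (by simp)
  have hfud : Differentiable ℝ (fderiv ℝ (u t)) :=
    ((hut.of_le h2le).fderiv_right (m := 1) (by norm_num)).differentiable one_ne_zero
  -- time derivatives
  have Hηu : HasDerivAt (fun s => η (u s x))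
      (fderiv ℝ η (u t x) (deriv (fun s => u s x) t)) t :=
    HasFDerivAt.comp_hasDerivAt t (hηd (u t x)).hasFDerivAt (hus t).hasDerivAt
  have Hηub : HasDerivAt (fun s => η (ubar s x))
      (fderiv ℝ η (ubar t x) (deriv (fun s => ubar s x) t)) t :=
    HasFDerivAt.comp_hasDerivAt t (hηd (ubar t x)).hasFDerivAt (hubs t).hasDerivAt
  have HAu : HasDerivAt (fun s => A (u s x))
      (fderiv ℝ A (u t x) (deriv (fun s => u s x) t)) t :=
    HasFDerivAt.comp_hasDerivAt t (hAd (u t x)).hasFDerivAt (hus t).hasDerivAt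
  have HAub : HasDerivAt (fun s => A (ubar s x))
      (fderiv ℝ A (ubar t x) (deriv (fun s => ubar s x) t)) t :=
    HasFDerivAt.comp_hasDerivAt t (hAd (ubar t x)).hasFDerivAt (hubs t).hasDerivAt
  have HGubt : HasDerivAt (fun s => G (ubar s x))
      (fderiv ℝ G (ubar t x) (deriv (fun s => ubar s x) t)) t :=
    HasFDerivAt.comp_hasDerivAt t (hGd (ubar t x)).hasFDerivAt (hubs t).hasDerivAt
  have HIT : HasDerivAt (fun s => ⟪G (ubar s x), A (u s x) - A (ubar s x)⟫)
      (⟪G (ubar t x), fderiv ℝ A (u t x) (deriv (fun s => u s x) t)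
          - fderiv ℝ A (ubar t x) (deriv (fun s => ubar s x) t)⟫
        + ⟪fderiv ℝ G (ubar t x) (deriv (fun s => ubar s x) t),
            A (u t x) - A (ubar t x)⟫) t :=
    HGubt.inner ℝ (HAu.sub HAub)
  have hT : deriv (fun s => η (u s x) - η (ubar s x)
      - ⟪G (ubar s x), A (u s x) - A (ubar s x)⟫) t
      = fderiv ℝ η (u t x) (deriv (fun s => u s x) t)
        - fderiv ℝ η (ubar t x) (deriv (fun s => ubar s x) t)
        - (⟪G (ubar t x), fderiv ℝ A (u t x) (deriv (fun s => u s x) t)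
            - fderiv ℝ A (ubar t x) (deriv (fun s => ubar s x) t)⟫
          + ⟪fderiv ℝ G (ubar t x) (deriv (fun s => ubar s x) t),
              A (u t x) - A (ubar t x)⟫) :=
    ((Hηu.sub Hηub).sub HIT).deriv
  -- spatial derivatives of compositions
  have Hqu : ∀ α, HasFDerivAt (fun y => q α (u t y))
      ((fderiv ℝ (q α) (u t x)).comp (fderiv ℝ (u t) x)) x :=
    fun α => (hqd α (u t x)).hasFDerivAt.comp x (hud x).hasFDerivAt
  have Hqub : ∀ α, HasFDerivAt (fun y => q α (ubar t y))
      ((fderiv ℝ (q α) (ubar t x)).comp (fderiv ℝ (ubar t) x)) x :=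
    fun α => (hqd α (ubar t x)).hasFDerivAt.comp x (hubd x).hasFDerivAt
  have HFu : ∀ α, HasFDerivAt (fun y => F α (u t y))
      ((fderiv ℝ (F α) (u t x)).comp (fderiv ℝ (u t) x)) x :=
    fun α => (hFd α (u t x)).hasFDerivAt.comp x (hud x).hasFDerivAt
  have HFub : ∀ α, HasFDerivAt (fun y => F α (ubar t y))
      ((fderiv ℝ (F α) (ubar t x)).comp (fderiv ℝ (ubar t) x)) x :=
    fun α => (hFd α (ubar t x)).hasFDerivAt.comp x (hubd x).hasFDerivAt
  have HGux : HasFDerivAt (fun y => G (u t y))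
      ((fderiv ℝ G (u t x)).comp (fderiv ℝ (u t) x)) x :=
    (hGd (u t x)).hasFDerivAt.comp x (hud x).hasFDerivAt
  have HGubx : HasFDerivAt (fun y => G (ubar t y))
      ((fderiv ℝ G (ubar t x)).comp (fderiv ℝ (ubar t) x)) x :=
    (hGd (ubar t x)).hasFDerivAt.comp x (hubd x).hasFDerivAt
  have hq1 : ∀ α, fderiv ℝ (fun y => q α (u t y)) x (Pi.single α 1)
      = fderiv ℝ (q α) (u t x) (fderiv ℝ (u t) x (Pi.single α 1)) :=
    fun α => by rw [(Hqu α).fderiv]; rfl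
  have hq1b : ∀ α, fderiv ℝ (fun y => q α (ubar t y)) x (Pi.single α 1)
      = fderiv ℝ (q α) (ubar t x) (fderiv ℝ (ubar t) x (Pi.single α 1)) :=
    fun α => by rw [(Hqub α).fderiv]; rfl
  have hF1 : ∀ α, fderiv ℝ (fun y => F α (u t y)) x (Pi.single α 1)
      = fderiv ℝ (F α) (u t x) (fderiv ℝ (u t) x (Pi.single α 1)) :=
    fun α => by rw [(HFu α).fderiv]; rfl
  have hF1b : ∀ α, fderiv ℝ (fun y => F α (ubar t y)) x (Pi.single α 1)
      = fderiv ℝ (F α) (ubar t x) (fderiv ℝ (ubar t) x (Pi.single α 1)) :=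
    fun α => by rw [(HFub α).fderiv]; rfl
  have hG2 : ∀ ξ, fderiv ℝ (fun y => G (ubar t y)) x ξ
      = fderiv ℝ G (ubar t x) (fderiv ℝ (ubar t) x ξ) :=
    fun ξ => by rw [HGubx.fderiv]; rfl
  -- viscous flux functions
  have hV : ∀ α, Differentiable ℝ
      (fun y => ∑ β, B α β (u t y) (fderiv ℝ (u t) y (Pi.single β 1))) := fun α =>
    Differentiable.fun_sum fun β _ =>
      (((hBd α β).comp hud).clm_apply (hfud.clm_apply (differentiable_const _)))
  have HV : ∀ α, HasFDerivAt
      (fun y => ∑ β, B α β (u t y) (fderiv ℝ (u t) y (Pi.single β 1)))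
      (fderiv ℝ (fun y => ∑ β, B α β (u t y) (fderiv ℝ (u t) y (Pi.single β 1))) x) x :=
    fun α => ((hV α) x).hasFDerivAt
  have hKd : ∀ α, DifferentiableAt ℝ
      (fun y => ⟪G (u t y), ∑ β, B α β (u t y) (fderiv ℝ (u t) y (Pi.single β 1))⟫) x :=
    fun α => DifferentiableAt.inner ℝ ((hGd (u t x)).comp x (hud x)) ((hV α) x)
  -- per-direction spatial derivative of the relative flux
  have hSpat : ∀ α, fderiv ℝ (fun y =>
        (q α (u t y) - q α (ubar t y)
          - ⟪G (ubar t y), F α (u t y) - F α (ubar t y)⟫)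
        - ε * ⟪G (u t y) - G (ubar t y),
            ∑ β, B α β (u t y) (fderiv ℝ (u t) y (Pi.single β 1))⟫)
      x (Pi.single α 1)
      = fderiv ℝ (q α) (u t x) (fderiv ℝ (u t) x (Pi.single α 1))
        - fderiv ℝ (q α) (ubar t x) (fderiv ℝ (ubar t) x (Pi.single α 1))
        - (⟪G (ubar t x), fderiv ℝ (F α) (u t x) (fderiv ℝ (u t) x (Pi.single α 1))
              - fderiv ℝ (F α) (ubar t x) (fderiv ℝ (ubar t) x (Pi.single α 1))⟫
          + ⟪fderiv ℝ G (ubar t x) (fderiv ℝ (ubar t) x (Pi.single α 1)),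
              F α (u t x) - F α (ubar t x)⟫)
        - ε * (fderiv ℝ (fun y => ⟪G (u t y),
                ∑ β, B α β (u t y) (fderiv ℝ (u t) y (Pi.single β 1))⟫) x (Pi.single α 1)
            - (⟪G (ubar t x), fderiv ℝ (fun y =>
                  ∑ β, B α β (u t y) (fderiv ℝ (u t) y (Pi.single β 1))) x (Pi.single α 1)⟫
              + ⟪fderiv ℝ G (ubar t x) (fderiv ℝ (ubar t) x (Pi.single α 1)),
                  ∑ β, B α β (u t x) (fderiv ℝ (u t) x (Pi.single β 1))⟫)) := by
    intro α
    have Hin1 := HGubx.inner ℝ ((HFu α).sub (HFub α))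
    have HK := (hKd α).hasFDerivAt
    have Hin2' := HGubx.inner ℝ (HV α)
    have heq : (fun y => ⟪G (u t y) - G (ubar t y),
          ∑ β, B α β (u t y) (fderiv ℝ (u t) y (Pi.single β 1))⟫)
        = fun y => (⟪G (u t y), ∑ β, B α β (u t y) (fderiv ℝ (u t) y (Pi.single β 1))⟫
            - ⟪G (ubar t y), ∑ β, B α β (u t y) (fderiv ℝ (u t) y (Pi.single β 1))⟫) :=
      funext fun y => inner_sub_left _ _ _
    have Hin2 : HasFDerivAt (fun y => ⟪G (u t y) - G (ubar t y),
          ∑ β, B α β (u t y) (fderiv ℝ (u t) y (Pi.single β 1))⟫)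
        (fderiv ℝ (fun y => ⟪G (u t y),
            ∑ β, B α β (u t y) (fderiv ℝ (u t) y (Pi.single β 1))⟫) x
          - (fderivInnerCLM ℝ ((fun y => G (ubar t y)) x,
              (fun y => ∑ β, B α β (u t y) (fderiv ℝ (u t) y (Pi.single β 1))) x)).comp
              (((fderiv ℝ G (ubar t x)).comp (fderiv ℝ (ubar t) x)).prod
                (fderiv ℝ (fun y => ∑ β, B α β (u t y) (fderiv ℝ (u t) y (Pi.single β 1))) x))) x := by
      rw [heq]
      exact HK.sub Hin2'
    have Hbig := (((Hqu α).sub (Hqub α)).sub Hin1).sub (Hin2.const_mul ε)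
    simp only [Pi.sub_def] at Hbig
    rw [Hbig.fderiv]
    simp only [ContinuousLinearMap.sub_apply, ContinuousLinearMap.smul_apply,
      ContinuousLinearMap.comp_apply, ContinuousLinearMap.prod_apply,
      fderivInnerCLM_apply, smul_eq_mul]
  -- converted entropy identities
  have huE := huent t x
  rw [Hηu.deriv] at huE
  have hqsum : (∑ α, fderiv ℝ (fun y => q α (u t y)) x (Pi.single α 1))
      = ∑ α, fderiv ℝ (q α) (u t x) (fderiv ℝ (u t) x (Pi.single α 1)) :=
    Finset.sum_congr rfl fun α _ => hq1 α
  rw [hqsum] at huE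
  have hubE := hubarent t x
  rw [Hηub.deriv] at hubE
  have hqsumb : (∑ α, fderiv ℝ (fun y => q α (ubar t y)) x (Pi.single α 1))
      = ∑ α, fderiv ℝ (q α) (ubar t x) (fderiv ℝ (ubar t) x (Pi.single α 1)) :=
    Finset.sum_congr rfl fun α _ => hq1b α
  rw [hqsumb] at hubE
  -- converted PDEs
  have P1 := hupde t x
  rw [HAu.deriv] at P1
  have hFsum : (∑ α, fderiv ℝ (fun y => F α (u t y)) x (Pi.single α 1))
      = ∑ α, fderiv ℝ (F α) (u t x) (fderiv ℝ (u t) x (Pi.single α 1)) :=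
    Finset.sum_congr rfl fun α _ => hF1 α
  rw [hFsum] at P1
  have P2 := hubarpde t x
  rw [HAub.deriv] at P2
  have hFsumb : (∑ α, fderiv ℝ (fun y => F α (ubar t y)) x (Pi.single α 1))
      = ∑ α, fderiv ℝ (F α) (ubar t x) (fderiv ℝ (ubar t) x (Pi.single α 1)) :=
    Finset.sum_congr rfl fun α _ => hF1b α
  rw [hFsumb] at P2
  have hsumF : (∑ α, fderiv ℝ (F α) (ubar t x) (fderiv ℝ (ubar t) x (Pi.single α 1)))
      = -(fderiv ℝ A (ubar t x) (deriv (fun s => ubar s x) t)) :=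
    by have h := P2; rw [add_comm] at h; exact eq_neg_of_add_eq_zero_left h
  -- inverse of ∇A(ubar)
  have hker : (fderiv ℝ A (ubar t x)).ker = ⊥ := by
    exact LinearMap.ker_eq_bot.mpr (hH1' (ubar t x)).1
  have hrange : (fderiv ℝ A (ubar t x)).range = ⊤ :=
    LinearMap.range_eq_top.mpr (hH1' (ubar t x)).2
  let e : EuclideanSpace ℝ (Fin n) ≃L[ℝ] EuclideanSpace ℝ (Fin n) :=
    ContinuousLinearEquiv.ofBijective (fderiv ℝ A (ubar t x)) hker hrange
  have hU : IsUnit (fderiv ℝ A (ubar t x)) :=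
    ⟨⟨fderiv ℝ A (ubar t x), (e.symm : EuclideanSpace ℝ (Fin n) →L[ℝ] EuclideanSpace ℝ (Fin n)),
      ContinuousLinearMap.ext fun v => e.apply_symm_apply v,
      ContinuousLinearMap.ext fun v => e.symm_apply_apply v⟩, rfl⟩
  have hPz : fderiv ℝ A (ubar t x)
      (Ring.inverse (fderiv ℝ A (ubar t x)) (A (u t x) - A (ubar t x)))
      = A (u t x) - A (ubar t x) := by
    have h := Ring.mul_inverse_cancel _ hU
    have h2 := congrArg (fun L : EuclideanSpace ℝ (Fin n) →L[ℝ] EuclideanSpace ℝ (Fin n) =>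
      L (A (u t x) - A (ubar t x))) h
    simpa [ContinuousLinearMap.mul_apply] using h2
  -- the symmetry computation
  have c2 : (∑ α, ⟪fderiv ℝ G (ubar t x) (fderiv ℝ (ubar t) x (Pi.single α 1)),
        fderiv ℝ (F α) (ubar t x)
          (Ring.inverse (fderiv ℝ A (ubar t x)) (A (u t x) - A (ubar t x)))⟫)
      = -⟪fderiv ℝ G (ubar t x) (deriv (fun s => ubar s x) t),
          A (u t x) - A (ubar t x)⟫ := by
    calc (∑ α, ⟪fderiv ℝ G (ubar t x) (fderiv ℝ (ubar t) x (Pi.single α 1)),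
            fderiv ℝ (F α) (ubar t x)
              (Ring.inverse (fderiv ℝ A (ubar t x)) (A (u t x) - A (ubar t x)))⟫)
        = ∑ α, ⟪fderiv ℝ G (ubar t x)
              (Ring.inverse (fderiv ℝ A (ubar t x)) (A (u t x) - A (ubar t x))),
            fderiv ℝ (F α) (ubar t x) (fderiv ℝ (ubar t) x (Pi.single α 1))⟫ :=
          Finset.sum_congr rfl fun α _ => symF α (ubar t x) _ _
      _ = ⟪fderiv ℝ G (ubar t x)
              (Ring.inverse (fderiv ℝ A (ubar t x)) (A (u t x) - A (ubar t x))),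
            ∑ α, fderiv ℝ (F α) (ubar t x) (fderiv ℝ (ubar t) x (Pi.single α 1))⟫ :=
          (inner_sum _ _ _).symm
      _ = -⟪fderiv ℝ G (ubar t x)
              (Ring.inverse (fderiv ℝ A (ubar t x)) (A (u t x) - A (ubar t x))),
            fderiv ℝ A (ubar t x) (deriv (fun s => ubar s x) t)⟫ := by
          rw [hsumF, inner_neg_right]
      _ = -⟪fderiv ℝ G (ubar t x) (deriv (fun s => ubar s x) t),
            fderiv ℝ A (ubar t x)
              (Ring.inverse (fderiv ℝ A (ubar t x)) (A (u t x) - A (ubar t x)))⟫ := by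
          rw [symA (ubar t x) (deriv (fun s => ubar s x) t)
            (Ring.inverse (fderiv ℝ A (ubar t x)) (A (u t x) - A (ubar t x)))]
      _ = -⟪fderiv ℝ G (ubar t x) (deriv (fun s => ubar s x) t),
            A (u t x) - A (ubar t x)⟫ := by rw [hPz]
  -- pairing the PDEs with G(ubar)
  have hvec : (fderiv ℝ A (u t x) (deriv (fun s => u s x) t)
        - fderiv ℝ A (ubar t x) (deriv (fun s => ubar s x) t))
      + ∑ α, (fderiv ℝ (F α) (u t x) (fderiv ℝ (u t) x (Pi.single α 1))
          - fderiv ℝ (F α) (ubar t x) (fderiv ℝ (ubar t) x (Pi.single α 1)))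
      = ε • ∑ α, fderiv ℝ
          (fun y => ∑ β, B α β (u t y) (fderiv ℝ (u t) y (Pi.single β 1)))
          x (Pi.single α 1) := by
    rw [Finset.sum_sub_distrib, hsumF, ← P1]
    abel
  have c1 : ⟪G (ubar t x), fderiv ℝ A (u t x) (deriv (fun s => u s x) t)
        - fderiv ℝ A (ubar t x) (deriv (fun s => ubar s x) t)⟫
      + ∑ α, ⟪G (ubar t x), fderiv ℝ (F α) (u t x) (fderiv ℝ (u t) x (Pi.single α 1))
          - fderiv ℝ (F α) (ubar t x) (fderiv ℝ (ubar t) x (Pi.single α 1))⟫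
      = ε * ∑ α, ⟪G (ubar t x), fderiv ℝ
          (fun y => ∑ β, B α β (u t y) (fderiv ℝ (u t) y (Pi.single β 1)))
          x (Pi.single α 1)⟫ := by
    have h2 := congrArg (fun v : EuclideanSpace ℝ (Fin n) => (⟪G (ubar t x), v⟫ : ℝ)) hvec
    simpa only [inner_add_right, inner_sum, real_inner_smul_right] using h2
  -- assemble the goal
  rw [hT]
  have hSsum : (∑ α, fderiv ℝ (fun y =>
        (q α (u t y) - q α (ubar t y)
          - ⟪G (ubar t y), F α (u t y) - F α (ubar t y)⟫)
        - ε * ⟪G (u t y) - G (ubar t y),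
            ∑ β, B α β (u t y) (fderiv ℝ (u t) y (Pi.single β 1))⟫)
      x (Pi.single α 1))
      = ∑ α, (fderiv ℝ (q α) (u t x) (fderiv ℝ (u t) x (Pi.single α 1))
        - fderiv ℝ (q α) (ubar t x) (fderiv ℝ (ubar t) x (Pi.single α 1))
        - (⟪G (ubar t x), fderiv ℝ (F α) (u t x) (fderiv ℝ (u t) x (Pi.single α 1))
              - fderiv ℝ (F α) (ubar t x) (fderiv ℝ (ubar t) x (Pi.single α 1))⟫
          + ⟪fderiv ℝ G (ubar t x) (fderiv ℝ (ubar t) x (Pi.single α 1)),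
              F α (u t x) - F α (ubar t x)⟫)
        - ε * (fderiv ℝ (fun y => ⟪G (u t y),
                ∑ β, B α β (u t y) (fderiv ℝ (u t) y (Pi.single β 1))⟫) x (Pi.single α 1)
            - (⟪G (ubar t x), fderiv ℝ (fun y =>
                  ∑ β, B α β (u t y) (fderiv ℝ (u t) y (Pi.single β 1))) x (Pi.single α 1)⟫
              + ⟪fderiv ℝ G (ubar t x) (fderiv ℝ (ubar t) x (Pi.single α 1)),
                  ∑ β, B α β (u t x) (fderiv ℝ (u t) x (Pi.single β 1))⟫))) :=
    Finset.sum_congr rfl fun α _ => hSpat α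
  rw [hSsum]
  simp only [hG2]
  have hRB : (∑ α, ∑ β, ⟪fderiv ℝ G (ubar t x) (fderiv ℝ (ubar t) x (Pi.single α 1)),
        B α β (u t x) (fderiv ℝ (u t) x (Pi.single β 1))⟫)
      = ∑ α, ⟪fderiv ℝ G (ubar t x) (fderiv ℝ (ubar t) x (Pi.single α 1)),
          ∑ β, B α β (u t x) (fderiv ℝ (u t) x (Pi.single β 1))⟫ :=
    Finset.sum_congr rfl fun α _ => (inner_sum _ _ _).symm
  rw [hRB]
  have hRF : (∑ α, ⟪fderiv ℝ G (ubar t x) (fderiv ℝ (ubar t) x (Pi.single α 1)),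
        F α (u t x) - F α (ubar t x)
          - fderiv ℝ (F α) (ubar t x)
              (Ring.inverse (fderiv ℝ A (ubar t x)) (A (u t x) - A (ubar t x)))⟫)
      = (∑ α, ⟪fderiv ℝ G (ubar t x) (fderiv ℝ (ubar t) x (Pi.single α 1)),
            F α (u t x) - F α (ubar t x)⟫)
        - ∑ α, ⟪fderiv ℝ G (ubar t x) (fderiv ℝ (ubar t) x (Pi.single α 1)),
            fderiv ℝ (F α) (ubar t x)
              (Ring.inverse (fderiv ℝ A (ubar t x)) (A (u t x) - A (ubar t x)))⟫ := by
    rw [← Finset.sum_sub_distrib]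
    exact Finset.sum_congr rfl fun α _ => inner_sub_right _ _ _
  rw [hRF]
  have hsplit : (∑ α, (fderiv ℝ (q α) (u t x) (fderiv ℝ (u t) x (Pi.single α 1))
        - fderiv ℝ (q α) (ubar t x) (fderiv ℝ (ubar t) x (Pi.single α 1))
        - (⟪G (ubar t x), fderiv ℝ (F α) (u t x) (fderiv ℝ (u t) x (Pi.single α 1))
              - fderiv ℝ (F α) (ubar t x) (fderiv ℝ (ubar t) x (Pi.single α 1))⟫
          + ⟪fderiv ℝ G (ubar t x) (fderiv ℝ (ubar t) x (Pi.single α 1)),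
              F α (u t x) - F α (ubar t x)⟫)
        - ε * (fderiv ℝ (fun y => ⟪G (u t y),
                ∑ β, B α β (u t y) (fderiv ℝ (u t) y (Pi.single β 1))⟫) x (Pi.single α 1)
            - (⟪G (ubar t x), fderiv ℝ (fun y =>
                  ∑ β, B α β (u t y) (fderiv ℝ (u t) y (Pi.single β 1))) x (Pi.single α 1)⟫
              + ⟪fderiv ℝ G (ubar t x) (fderiv ℝ (ubar t) x (Pi.single α 1)),
                  ∑ β, B α β (u t x) (fderiv ℝ (u t) x (Pi.single β 1))⟫))))
      = (∑ α, fderiv ℝ (q α) (u t x) (fderiv ℝ (u t) x (Pi.single α 1)))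
        - (∑ α, fderiv ℝ (q α) (ubar t x) (fderiv ℝ (ubar t) x (Pi.single α 1)))
        - ((∑ α, ⟪G (ubar t x), fderiv ℝ (F α) (u t x) (fderiv ℝ (u t) x (Pi.single α 1))
              - fderiv ℝ (F α) (ubar t x) (fderiv ℝ (ubar t) x (Pi.single α 1))⟫)
          + ∑ α, ⟪fderiv ℝ G (ubar t x) (fderiv ℝ (ubar t) x (Pi.single α 1)),
              F α (u t x) - F α (ubar t x)⟫)
        - ε * (∑ α, fderiv ℝ (fun y => ⟪G (u t y),
                ∑ β, B α β (u t y) (fderiv ℝ (u t) y (Pi.single β 1))⟫) x (Pi.single α 1))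
        + ε * (∑ α, ⟪G (ubar t x), fderiv ℝ (fun y =>
                  ∑ β, B α β (u t y) (fderiv ℝ (u t) y (Pi.single β 1))) x (Pi.single α 1)⟫)
        + ε * ∑ α, ⟪fderiv ℝ G (ubar t x) (fderiv ℝ (ubar t) x (Pi.single α 1)),
                  ∑ β, B α β (u t x) (fderiv ℝ (u t) x (Pi.single β 1))⟫ := by
    simp only [mul_sub, mul_add, sub_eq_add_neg, neg_add_rev, neg_neg,
      Finset.sum_add_distrib, Finset.sum_neg_distrib, ← Finset.mul_sum]
    ring
  rw [hsplit]
  linear_combination huE - hubE - c1 - c2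
end
end
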